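/- arXiv:2106.00298 — 4 statements merged into one kernel-verified Lean document; each statement's English description precedes it below -/
import Mathlib

section
/- Fix z ≥ 0. Let p < q be primes and write h_p := E[B_p], h_q := E[B_q]. If p < q ≤ p^{e^z}, then E[(B_p − h_p)(B_q − h_q)] = −h_p · h_q (in particular E[B_p B_q] = 0), while if q > p^{e^z}, then B_p and B_q are independent and E[(B_p − h_p)(B_q − h_q)] = 0. -/
open MeasureTheory ProbabilityTheory Filter Finset
open scoped Classical ENNReal

/-- The set of primes `q` with `p < q ≤ p ^ (e ^ z)`. -/
noncomputable def primesBetween (z : ℝ) (p : ℕ) : Finset ℕ :=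
  (Finset.range (⌊(p : ℝ) ^ Real.exp z⌋₊ + 1)).filter (fun q => q.Prime ∧ p < q)

/-- The random variable `B_p = X_p · ∏_{p < q ≤ p^{e^z}} (1 - X_q)`. -/
noncomputable def B {Ω : Type*} (z : ℝ) (X : ℕ → Ω → ℝ) (p : ℕ) (ω : Ω) : ℝ :=
  X p ω * ∏ q ∈ primesBetween z p, (1 - X q ω)

namespace CovAux

/-- The factor function. -/
noncomputable def g (p r : ℕ) (x : ℝ) : ℝ := if r = p then x else 1 - x

lemma measurable_g (p r : ℕ) : Measurable (g p r) := by
  unfold g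
  split_ifs
  · exact measurable_id
  · exact measurable_const.sub measurable_id

lemma mem_primesBetween {z : ℝ} {p r : ℕ} :
    r ∈ primesBetween z p ↔ r.Prime ∧ p < r ∧ (r : ℝ) ≤ (p : ℝ) ^ Real.exp z := by
  unfold primesBetween
  simp only [Finset.mem_filter, Finset.mem_range, Nat.lt_succ_iff]
  rw [Nat.le_floor_iff (Real.rpow_nonneg (Nat.cast_nonneg p) _)]
  tauto

lemma not_mem_self (z : ℝ) (p : ℕ) : p ∉ primesBetween z p := by
  intro h
  exact lt_irrefl p (mem_primesBetween.1 h).2.1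

lemma B_eq_prod {Ω : Type*} (z : ℝ) (X : ℕ → Ω → ℝ) (p : ℕ) (ω : Ω) :
    B z X p ω = ∏ r ∈ insert p (primesBetween z p), g p r (X r ω) := by
  rw [Finset.prod_insert (not_mem_self z p)]
  unfold B g
  rw [if_pos rfl]
  congr 1
  refine Finset.prod_congr rfl fun r hr => ?_
  rw [if_neg]
  exact Nat.ne_of_gt (mem_primesBetween.1 hr).2.1

variable {Ω : Type*} [MeasurableSpace Ω] {μ : Measure Ω} [IsProbabilityMeasure μ]
  {X : ℕ → Ω → ℝ}

lemma measurable_B (hmeas : ∀ p : ℕ, p.Prime → Measurable (X p)) {p : ℕ} (hp : p.Prime)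
    (z : ℝ) : Measurable (B z X p) := by
  unfold B
  exact (hmeas p hp).mul (Finset.measurable_prod _ fun r hr =>
    measurable_const.sub (hmeas r (mem_primesBetween.1 hr).1))

lemma ae_event (hmeas : ∀ p : ℕ, p.Prime → Measurable (X p))
    (hone : ∀ p : ℕ, p.Prime → μ {ω | X p ω = 1} = ENNReal.ofReal (1 / p))
    (hzero : ∀ p : ℕ, p.Prime → μ {ω | X p ω = 0} = ENNReal.ofReal (1 - 1 / p)) :
    ∀ᵐ ω ∂μ, ∀ r : ℕ, r.Prime → X r ω = 0 ∨ X r ω = 1 := by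
  rw [ae_all_iff]
  intro r
  by_cases hr : r.Prime
  · have h2 : (2 : ℝ) ≤ r := by exact_mod_cast hr.two_le
    have hmr := hmeas r hr
    have hs0 : MeasurableSet {ω | X r ω = 0} := hmr (measurableSet_singleton 0)
    have hs1 : MeasurableSet {ω | X r ω = 1} := hmr (measurableSet_singleton 1)
    have hdisj : Disjoint {ω | X r ω = 0} {ω | X r ω = 1} := by
      rw [Set.disjoint_left]
      intro ω h0 h1
      simp only [Set.mem_setOf_eq] at h0 h1
      rw [h0] at h1; norm_num at h1
    have h1r : (1:ℝ)/r ≤ 1 := by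
      rw [div_le_one (by linarith)]; linarith
    have hunion : μ ({ω | X r ω = 0} ∪ {ω | X r ω = 1}) = 1 := by
      rw [measure_union hdisj hs1, hzero r hr, hone r hr,
        ← ENNReal.ofReal_add (by linarith) (by positivity)]
      norm_num
    have hcompl : μ ({ω | X r ω = 0} ∪ {ω | X r ω = 1})ᶜ = 0 := by
      rw [measure_compl (hs0.union hs1) (measure_ne_top μ _), hunion, measure_univ]
      simp
    filter_upwards [measure_eq_zero_iff_ae_notMem.1 hcompl] with ω hω
    intro _
    simp only [Set.mem_compl_iff, Set.mem_union, Set.mem_setOf_eq, not_or, not_not] at hω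
    by_contra hcon
    push_neg at hcon
    exact hω ⟨hcon.1, hcon.2⟩
  · filter_upwards with ω h
    exact absurd h hr

lemma ae_B_bound (hmeas : ∀ p : ℕ, p.Prime → Measurable (X p))
    (hone : ∀ p : ℕ, p.Prime → μ {ω | X p ω = 1} = ENNReal.ofReal (1 / p))
    (hzero : ∀ p : ℕ, p.Prime → μ {ω | X p ω = 0} = ENNReal.ofReal (1 - 1 / p))
    {p : ℕ} (hp : p.Prime) (z : ℝ) :
    ∀ᵐ ω ∂μ, ‖B z X p ω‖ ≤ 1 ∧ 0 ≤ B z X p ω := by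
  filter_upwards [ae_event hmeas hone hzero] with ω hω
  have key : ∀ r : ℕ, r.Prime → 0 ≤ X r ω ∧ X r ω ≤ 1 := by
    intro r hr
    rcases hω r hr with h | h <;> rw [h] <;> norm_num
  have hprod0 : 0 ≤ ∏ q ∈ primesBetween z p, (1 - X q ω) :=
    Finset.prod_nonneg fun r hr => by
      have := (key r (mem_primesBetween.1 hr).1).2; linarith
  have hprod1 : ∏ q ∈ primesBetween z p, (1 - X q ω) ≤ 1 :=
    Finset.prod_le_one (fun r hr => by
      have := (key r (mem_primesBetween.1 hr).1).2; linarith)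
      (fun r hr => by have := (key r (mem_primesBetween.1 hr).1).1; linarith)
  have hXp := key p hp
  have hB0 : 0 ≤ B z X p ω := mul_nonneg hXp.1 hprod0
  have hB1 : B z X p ω ≤ 1 := by
    calc X p ω * ∏ q ∈ primesBetween z p, (1 - X q ω) ≤ 1 * 1 :=
          mul_le_mul hXp.2 hprod1 hprod0 (by norm_num)
      _ = 1 := by norm_num
  exact ⟨by rw [Real.norm_eq_abs, abs_le]; constructor <;> linarith, hB0⟩

lemma integrable_B (hmeas : ∀ p : ℕ, p.Prime → Measurable (X p))
    (hone : ∀ p : ℕ, p.Prime → μ {ω | X p ω = 1} = ENNReal.ofReal (1 / p))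
    (hzero : ∀ p : ℕ, p.Prime → μ {ω | X p ω = 0} = ENNReal.ofReal (1 - 1 / p))
    {p : ℕ} (hp : p.Prime) (z : ℝ) : Integrable (B z X p) μ := by
  refine Integrable.mono' (integrable_const 1)
    (measurable_B hmeas hp z).aestronglyMeasurable ?_
  filter_upwards [ae_B_bound hmeas hone hzero hp z] with ω hω using hω.1

lemma integrable_B_mul_B (hmeas : ∀ p : ℕ, p.Prime → Measurable (X p))
    (hone : ∀ p : ℕ, p.Prime → μ {ω | X p ω = 1} = ENNReal.ofReal (1 / p))
    (hzero : ∀ p : ℕ, p.Prime → μ {ω | X p ω = 0} = ENNReal.ofReal (1 - 1 / p))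
    {p q : ℕ} (hp : p.Prime) (hq : q.Prime) (z : ℝ) :
    Integrable (fun ω => B z X p ω * B z X q ω) μ := by
  refine Integrable.mono' (integrable_const 1)
    ((measurable_B hmeas hp z).mul (measurable_B hmeas hq z)).aestronglyMeasurable ?_
  filter_upwards [ae_B_bound hmeas hone hzero hp z, ae_B_bound hmeas hone hzero hq z]
    with ω h1 h2
  rw [norm_mul]
  calc ‖B z X p ω‖ * ‖B z X q ω‖ ≤ 1 * 1 :=
        mul_le_mul h1.1 h2.1 (norm_nonneg _) (by norm_num)
    _ = 1 := by norm_num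

end CovAux

open CovAux in
theorem covariance_Bp_Bq (z : ℝ) (hz : 0 ≤ z)
    {Ω : Type*} [MeasurableSpace Ω] (μ : Measure Ω) [IsProbabilityMeasure μ]
    (X : ℕ → Ω → ℝ)
    (hmeas : ∀ p : ℕ, p.Prime → Measurable (X p))
    (hindep : iIndepFun (fun p : {p : ℕ // p.Prime} => X p.1) μ)
    (hone : ∀ p : ℕ, p.Prime → μ {ω | X p ω = 1} = ENNReal.ofReal (1 / p))
    (hzero : ∀ p : ℕ, p.Prime → μ {ω | X p ω = 0} = ENNReal.ofReal (1 - 1 / p))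
    (p q : ℕ) (hp : p.Prime) (hq : q.Prime) (hpq : p < q) :
    ((q : ℝ) ≤ (p : ℝ) ^ Real.exp z →
      ((∫ ω, (B z X p ω - ∫ ω', B z X p ω' ∂μ) * (B z X q ω - ∫ ω', B z X q ω' ∂μ) ∂μ)
          = -((∫ ω, B z X p ω ∂μ) * (∫ ω, B z X q ω ∂μ)) ∧
        (∫ ω, B z X p ω * B z X q ω ∂μ) = 0)) ∧
    ((p : ℝ) ^ Real.exp z < (q : ℝ) →
      (IndepFun (B z X p) (B z X q) μ ∧
        (∫ ω, (B z X p ω - ∫ ω', B z X p ω' ∂μ) * (B z X q ω - ∫ ω', B z X q ω' ∂μ) ∂μ) = 0)) := by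
  have intP := integrable_B (μ := μ) hmeas hone hzero hp z
  have intQ := integrable_B (μ := μ) hmeas hone hzero hq z
  have intPQ := integrable_B_mul_B (μ := μ) hmeas hone hzero hp hq z
  set a := ∫ ω, B z X p ω ∂μ with ha
  set b := ∫ ω, B z X q ω ∂μ with hb
  constructor
  · -- case q ≤ p^{e^z}
    intro hqle
    have hqmem : q ∈ primesBetween z p := mem_primesBetween.2 ⟨hq, hpq, hqle⟩
    have hae0 : ∀ᵐ ω ∂μ, B z X p ω * B z X q ω = 0 := by
      filter_upwards [ae_event hmeas hone hzero] with ω hω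
      rcases hω q hq with h | h
      · have : B z X q ω = 0 := by unfold B; rw [h, zero_mul]
        rw [this, mul_zero]
      · have : B z X p ω = 0 := by
          unfold B
          rw [Finset.prod_eq_zero hqmem (by rw [h]; ring), mul_zero]
        rw [this, zero_mul]
    have hint0 : (∫ ω, B z X p ω * B z X q ω ∂μ) = 0 :=
      integral_eq_zero_of_ae hae0
    refine ⟨?_, hint0⟩
    have hexp : ∀ ω, (B z X p ω - a) * (B z X q ω - b)
        = B z X p ω * B z X q ω - b * B z X p ω - a * B z X q ω + a * b := by
      intro ω; ring
    simp_rw [hexp]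
    have ibP : Integrable (fun ω => b * B z X p ω) μ := intP.const_mul b
    have iaQ : Integrable (fun ω => a * B z X q ω) μ := intQ.const_mul a
    have i2 : Integrable (fun ω => B z X p ω * B z X q ω - b * B z X p ω) μ := intPQ.sub ibP
    have i1 : Integrable
        (fun ω => B z X p ω * B z X q ω - b * B z X p ω - a * B z X q ω) μ := i2.sub iaQ
    rw [integral_add i1 (integrable_const _), integral_sub i2 iaQ, integral_sub intPQ ibP,
      integral_const_mul, integral_const_mul, integral_const, hint0]
    simp only [measure_univ, probReal_univ, ENNReal.toReal_one, smul_eq_mul, one_mul]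
    rw [← ha, ← hb]
    ring
  · -- case p^{e^z} < q
    intro hqgt
    -- index sets
    set Sp0 : Finset ℕ := insert p (primesBetween z p) with hSp0
    set Sq0 : Finset ℕ := insert q (primesBetween z q) with hSq0
    have hSp0_prime : ∀ r ∈ Sp0, r.Prime := by
      intro r hr
      rcases Finset.mem_insert.1 hr with h | h
      · rw [h]; exact hp
      · exact (mem_primesBetween.1 h).1
    have hSq0_prime : ∀ r ∈ Sq0, r.Prime := by
      intro r hr
      rcases Finset.mem_insert.1 hr with h | h
      · rw [h]; exact hq
      · exact (mem_primesBetween.1 h).1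
    have hSp0_lt : ∀ r ∈ Sp0, r < q := by
      intro r hr
      have hrle : (r : ℝ) ≤ (p : ℝ) ^ Real.exp z := by
        rcases Finset.mem_insert.1 hr with h | h
        · rw [h]
          calc (p : ℝ) = (p : ℝ) ^ (1 : ℝ) := (Real.rpow_one _).symm
            _ ≤ (p : ℝ) ^ Real.exp z :=
              Real.rpow_le_rpow_of_exponent_le (by exact_mod_cast hp.one_lt.le)
                (Real.one_le_exp hz)
        · exact (mem_primesBetween.1 h).2.2
      have : (r : ℝ) < (q : ℝ) := lt_of_le_of_lt hrle hqgt
      exact_mod_cast this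
    have hSq0_ge : ∀ r ∈ Sq0, q ≤ r := by
      intro r hr
      rcases Finset.mem_insert.1 hr with h | h
      · rw [h]
      · exact (mem_primesBetween.1 h).2.1.le
    set Sp : Finset {n : ℕ // n.Prime} := Sp0.subtype Nat.Prime with hSp
    set Sq : Finset {n : ℕ // n.Prime} := Sq0.subtype Nat.Prime with hSq
    have hdisj : Disjoint Sp Sq := by
      rw [Finset.disjoint_left]
      intro i hi hj
      rw [hSp, Finset.mem_subtype] at hi
      rw [hSq, Finset.mem_subtype] at hj
      exact absurd (hSq0_ge _ hj) (not_le.2 (hSp0_lt _ hi))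
    have hXmeas : ∀ i : {n : ℕ // n.Prime}, Measurable (X i.1) := fun i => hmeas i.1 i.2
    have hbase := hindep.indepFun_finset Sp Sq hdisj hXmeas
    -- composition functions
    have key : ∀ (t : ℕ) (ht : t.Prime), (fun v : (↥(Finset.subtype Nat.Prime
        (insert t (primesBetween z t)))) → ℝ =>
          ∏ i : ↥(Finset.subtype Nat.Prime (insert t (primesBetween z t))),
            g t (i : {n : ℕ // n.Prime}).1 (v i))
        ∘ (fun ω (i : ↥(Finset.subtype Nat.Prime (insert t (primesBetween z t)))) =>
            X (i : {n : ℕ // n.Prime}).1 ω) = B z X t := by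
      intro t ht
      funext ω
      simp only [Function.comp_apply]
      rw [Finset.prod_coe_sort (f := fun j : {n : ℕ // n.Prime} => g t j.1 (X j.1 ω)),
        Finset.prod_subtype_of_mem (fun r => g t r (X r ω)) (by
          intro r hr
          rcases Finset.mem_insert.1 hr with h | h
          · rw [h]; exact ht
          · exact (mem_primesBetween.1 h).1)]
      exact (B_eq_prod z X t ω).symm
    have hφmeas : ∀ (t : ℕ) (S : Finset {n : ℕ // n.Prime}),
        Measurable (fun v : (↥S → ℝ) => ∏ i : ↥S, g t (i : {n : ℕ // n.Prime}).1 (v i)) := by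
      intro t S
      exact Finset.measurable_prod _ fun i _ =>
        (measurable_g t _).comp (measurable_pi_apply i)
    have hIndep : IndepFun (B z X p) (B z X q) μ := by
      have := hbase.comp (hφmeas p Sp) (hφmeas q Sq)
      rwa [hSp, hSq, hSp0, hSq0, key p hp, key q hq] at this
    refine ⟨hIndep, ?_⟩
    have hIndep' : IndepFun (fun ω => B z X p ω - a) (fun ω => B z X q ω - b) μ :=
      hIndep.comp (measurable_id.sub measurable_const) (measurable_id.sub measurable_const)
    have iPa : Integrable (fun ω => B z X p ω - a) μ := intP.sub (integrable_const a)
    have iQb : Integrable (fun ω => B z X q ω - b) μ := intQ.sub (integrable_const b)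
    have hmul := hIndep'.integral_mul_eq_mul_integral iPa.aestronglyMeasurable iQb.aestronglyMeasurable
    have heq : ((fun ω => B z X p ω - a) * fun ω => B z X q ω - b)
        = fun ω => (B z X p ω - a) * (B z X q ω - b) := rfl
    rw [heq] at hmul
    rw [hmul, integral_sub intP (integrable_const a), integral_sub intQ (integrable_const b),
      integral_const, integral_const]
    simp only [measure_univ, probReal_univ, ENNReal.toReal_one, one_smul]
    rw [← ha, ← hb]
    ring
end

section
/- Fix z ≥ 0, a positive integer u and an exponent vector r = (r_1, …, r_u) ∈ ℕ^u (each r_i ≥ 1). Then for all primes p_1, …, p_u (not necessarily distinct), E[ ∏_{i=1}^{u} |B_{p_i} − E[B_{p_i}]|^{r_i} ] = O_{r,z}( 1 / rad(p_1 ⋯ p_u) ), where rad denotes the radical (the product of the distinct primes dividing the argument) and the implied constant depends only on r and z. -/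
open MeasureTheory ProbabilityTheory Filter Finset
open scoped Classical ENNReal

/-- The integral of a finite product of independent random variables is the
product of the integrals. -/
lemma aux_integral_finset_prod {Ω : Type*} [MeasurableSpace Ω] (μ : Measure Ω)
    [IsProbabilityMeasure μ] {ι : Type*} (f : ι → Ω → ℝ)
    (hindep : iIndepFun f μ)
    (hmeas : ∀ i, Measurable (f i)) (s : Finset ι) :
    ∫ ω, ∏ i ∈ s, f i ω ∂μ = ∏ i ∈ s, ∫ ω, f i ω ∂μ := by
  classical
  induction s using Finset.induction_on with
  | empty => simp
  | @insert a s ha ih =>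
    have hind : IndepFun (f a) (∏ j ∈ s, f j) μ :=
      (hindep.indepFun_finsetProd_of_notMem hmeas ha).symm
    have hprodmeas : Measurable (∏ j ∈ s, f j) := by
      rw [show (∏ j ∈ s, f j) = fun ω => ∏ j ∈ s, f j ω by
        ext ω; simp [Finset.prod_apply]]
      exact Finset.measurable_prod s fun i _ => hmeas i
    calc ∫ ω, ∏ i ∈ insert a s, f i ω ∂μ
        = ∫ ω, f a ω * (∏ j ∈ s, f j) ω ∂μ := by
          simp [Finset.prod_insert ha, Finset.prod_apply]
      _ = (∫ ω, f a ω ∂μ) * ∫ ω, (∏ j ∈ s, f j) ω ∂μ :=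
          hind.integral_mul_eq_mul_integral (hmeas a).aestronglyMeasurable hprodmeas.aestronglyMeasurable
      _ = ∏ i ∈ insert a s, ∫ ω, f i ω ∂μ := by
          rw [Finset.prod_insert ha, ← ih]
          simp [Finset.prod_apply]

lemma aux_primeFactors_prod {ι : Type*} (s : Finset ι) (g : ι → ℕ)
    (hg : ∀ i ∈ s, (g i).Prime) :
    (∏ i ∈ s, g i).primeFactors = s.image g := by
  classical
  induction s using Finset.induction_on with
  | empty => simp
  | @insert a s ha ih =>
    have hga : (g a).Prime := hg a (Finset.mem_insert_self a s)
    have hs : ∀ i ∈ s, (g i).Prime := fun i hi => hg i (Finset.mem_insert_of_mem hi)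
    have hne : (∏ i ∈ s, g i) ≠ 0 :=
      Finset.prod_ne_zero_iff.2 fun i hi => (hs i hi).pos.ne'
    rw [Finset.prod_insert ha, Nat.primeFactors_mul hga.pos.ne' hne, ih hs,
      Finset.image_insert, hga.primeFactors]
    rfl

theorem moment_bound_radical (z : ℝ) (hz : 0 ≤ z) (u : ℕ) (hu : 0 < u)
    (r : Fin u → ℕ) (hr : ∀ i, 1 ≤ r i)
    {Ω : Type*} [MeasurableSpace Ω] (μ : Measure Ω) [IsProbabilityMeasure μ]
    (X : ℕ → Ω → ℝ)
    (hmeas : ∀ p : ℕ, p.Prime → Measurable (X p))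
    (hindep : iIndepFun (fun p : {p : ℕ // p.Prime} => X p.1) μ)
    (hone : ∀ p : ℕ, p.Prime → μ {ω | X p ω = 1} = ENNReal.ofReal (1 / p))
    (hzero : ∀ p : ℕ, p.Prime → μ {ω | X p ω = 0} = ENNReal.ofReal (1 - 1 / p))
    :
    ∃ C : ℝ, 0 < C ∧ ∀ p : Fin u → ℕ, (∀ i, (p i).Prime) →
      |∫ ω, ∏ i, |B z X (p i) ω - ∫ ω', B z X (p i) ω' ∂μ| ^ (r i) ∂μ|
        ≤ C / ((∏ i, p i).primeFactors.prod fun q => (q : ℝ)) := by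
  classical
  -- Basic a.e. facts about the `X q`.
  have h01 : ∀ q : ℕ, q.Prime → ∀ᵐ ω ∂μ, X q ω = 0 ∨ X q ω = 1 := by
    intro q hq
    have hq1 : (1 : ℝ) ≤ q := by exact_mod_cast hq.one_lt.le
    have hinv : (0 : ℝ) ≤ 1 / q := by positivity
    have hinv1 : (1 : ℝ) / q ≤ 1 := by
      rw [div_le_one (by linarith)]; exact hq1
    have hA : MeasurableSet {ω | X q ω = 1} := hmeas q hq (measurableSet_singleton 1)
    have hB : MeasurableSet {ω | X q ω = 0} := hmeas q hq (measurableSet_singleton 0)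
    have hdisj : Disjoint {ω | X q ω = 0} {ω | X q ω = 1} := by
      rw [Set.disjoint_left]
      intro ω h0 h1
      simp only [Set.mem_setOf_eq] at h0 h1
      rw [h0] at h1; norm_num at h1
    have hunion : μ ({ω | X q ω = 0} ∪ {ω | X q ω = 1}) = 1 := by
      rw [measure_union hdisj hA, hzero q hq, hone q hq,
        ← ENNReal.ofReal_add (by linarith) hinv]
      norm_num
    have hcompl : μ ({ω | X q ω = 0} ∪ {ω | X q ω = 1})ᶜ = 0 := by
      rw [measure_compl (hB.union hA) (measure_ne_top μ _), hunion, measure_univ]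
      simp
    have hset : {ω | ¬(X q ω = 0 ∨ X q ω = 1)} = ({ω | X q ω = 0} ∪ {ω | X q ω = 1})ᶜ := by
      ext ω; simp [not_or]
    rw [ae_iff, hset]
    exact hcompl
  -- Measurability of `B`.
  have hprimeOf : ∀ {z' : ℝ} {p q : ℕ}, q ∈ primesBetween z' p → q.Prime := by
    intro z' p q hqmem
    simp only [primesBetween, Finset.mem_filter] at hqmem
    exact hqmem.2.1
  have hBmeas : ∀ q : ℕ, q.Prime → Measurable (B z X q) := by
    intro q hq
    exact (hmeas q hq).mul
      (Finset.measurable_prod _ fun s hs => measurable_const.sub (hmeas s (hprimeOf hs)))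
  -- A.e. bounds on `B`.
  have hB01 : ∀ q : ℕ, q.Prime →
      ∀ᵐ ω ∂μ, 0 ≤ B z X q ω ∧ B z X q ω ≤ X q ω ∧ 0 ≤ X q ω ∧ X q ω ≤ 1 := by
    intro q hq
    have h2 : ∀ᵐ ω ∂μ, ∀ s ∈ primesBetween z q, X s ω = 0 ∨ X s ω = 1 :=
      (Filter.eventually_all_finset _).2 fun s hs => h01 s (hprimeOf hs)
    filter_upwards [h01 q hq, h2] with ω hω1 hω2
    have hXq0 : 0 ≤ X q ω := by rcases hω1 with h | h <;> simp [h]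
    have hXq1 : X q ω ≤ 1 := by rcases hω1 with h | h <;> simp [h]
    have hprod0 : 0 ≤ ∏ s ∈ primesBetween z q, (1 - X s ω) :=
      Finset.prod_nonneg fun s hs => by rcases hω2 s hs with h | h <;> simp [h]
    have hprod1 : (∏ s ∈ primesBetween z q, (1 - X s ω)) ≤ 1 :=
      Finset.prod_le_one (fun s hs => by rcases hω2 s hs with h | h <;> simp [h])
        (fun s hs => by rcases hω2 s hs with h | h <;> simp [h])
    refine ⟨mul_nonneg hXq0 hprod0, ?_, hXq0, hXq1⟩
    calc X q ω * ∏ s ∈ primesBetween z q, (1 - X s ω) ≤ X q ω * 1 :=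
          mul_le_mul_of_nonneg_left hprod1 hXq0
      _ = X q ω := mul_one _
  -- Integrability.
  have hXint : ∀ q : ℕ, q.Prime → Integrable (X q) μ := by
    intro q hq
    refine Integrable.mono' (integrable_const 1) (hmeas q hq).aestronglyMeasurable ?_
    filter_upwards [h01 q hq] with ω hω
    rcases hω with h | h <;> simp [h]
  have hBint : ∀ q : ℕ, q.Prime → Integrable (B z X q) μ := by
    intro q hq
    refine Integrable.mono' (integrable_const 1) (hBmeas q hq).aestronglyMeasurable ?_
    filter_upwards [hB01 q hq] with ω hω
    rw [Real.norm_eq_abs, abs_of_nonneg hω.1]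
    exact hω.2.1.trans hω.2.2.2
  -- Expectation of `X q`.
  have hEX : ∀ q : ℕ, q.Prime → ∫ ω, X q ω ∂μ = 1 / q := by
    intro q hq
    have hA : MeasurableSet {ω | X q ω = 1} := hmeas q hq (measurableSet_singleton 1)
    have hae : X q =ᵐ[μ] Set.indicator {ω | X q ω = 1} (fun _ => (1 : ℝ)) := by
      filter_upwards [h01 q hq] with ω hω
      rcases hω with h | h <;> simp [Set.indicator_apply, Set.mem_setOf_eq, h]
    rw [integral_congr_ae hae, integral_indicator_const (1 : ℝ) hA, measureReal_def, hone q hq,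
      ENNReal.toReal_ofReal (by positivity)]
    simp
  -- Expectation bounds for `B q`.
  have hEB : ∀ q : ℕ, q.Prime →
      0 ≤ (∫ ω', B z X q ω' ∂μ) ∧ (∫ ω', B z X q ω' ∂μ) ≤ 1 / q := by
    intro q hq
    constructor
    · exact integral_nonneg_of_ae ((hB01 q hq).mono fun ω hω => hω.1)
    · rw [← hEX q hq]
      exact integral_mono_ae (hBint q hq) (hXint q hq)
        ((hB01 q hq).mono fun ω hω => hω.2.1)
  refine ⟨2 ^ u, by positivity, ?_⟩
  intro p hp
  set e : ℕ → ℝ := fun q => ∫ ω', B z X q ω' ∂μ with he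
  set T : Finset ℕ := Finset.image p Finset.univ with hT
  have hTprime : ∀ q ∈ T, q.Prime := by
    intro q hq
    rw [hT, Finset.mem_image] at hq
    obtain ⟨i, _, rfl⟩ := hq
    exact hp i
  have hTq1 : ∀ q ∈ T, (1 : ℝ) ≤ q := fun q hq => by
    exact_mod_cast (hTprime q hq).one_lt.le
  have hrad : (∏ i, p i).primeFactors = T := aux_primeFactors_prod Finset.univ p fun i _ => hp i
  have hTpos : (0 : ℝ) < ∏ q ∈ T, (q : ℝ) :=
    Finset.prod_pos fun q hq => lt_of_lt_of_le one_pos (hTq1 q hq)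
  -- the dominating function
  set g : ℕ → Ω → ℝ := fun q ω => X q ω + 1 / q with hg
  -- pointwise a.e. bound
  have hgmeas : ∀ q ∈ T, Measurable (g q) := fun q hq =>
    (hmeas q (hTprime q hq)).add_const _
  have hptwise : ∀ᵐ ω ∂μ,
      (∏ i, |B z X (p i) ω - e (p i)| ^ (r i)) ≤ ∏ q ∈ T, g q ω := by
    have hall : ∀ᵐ ω ∂μ, ∀ q ∈ T,
        0 ≤ B z X q ω ∧ B z X q ω ≤ X q ω ∧ 0 ≤ X q ω ∧ X q ω ≤ 1 :=
      (Filter.eventually_all_finset _).2 fun q hq => hB01 q (hTprime q hq)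
    filter_upwards [hall] with ω hω
    set t : ℕ → ℝ := fun q => |B z X q ω - e q| with ht
    have ht0 : ∀ q ∈ T, 0 ≤ t q := fun q _ => abs_nonneg _
    have ht1 : ∀ q ∈ T, t q ≤ 1 := by
      intro q hq
      have h1 := hω q hq
      have h2 := hEB q (hTprime q hq)
      have hq1 := hTq1 q hq
      have hinv1 : (1 : ℝ) / q ≤ 1 := by rw [div_le_one (by linarith)]; exact hq1
      rw [ht, abs_le]
      constructor <;> [linarith [h1.1, h2.2]; linarith [h1.2.1, h1.2.2.2, h2.1]]
    have htg : ∀ q ∈ T, t q ≤ g q ω := by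
      intro q hq
      have h1 := hω q hq
      have h2 := hEB q (hTprime q hq)
      have hinv : (0 : ℝ) ≤ 1 / q := by positivity
      rw [ht, abs_le, hg]
      constructor <;> [linarith [h1.1, h2.2, h1.2.2.1]; linarith [h1.2.1, h2.1, h1.2.2.1]]
    calc (∏ i, |B z X (p i) ω - e (p i)| ^ (r i))
        = ∏ q ∈ T, ∏ i ∈ Finset.univ.filter (fun i => p i = q), t (p i) ^ (r i) :=
          (Finset.prod_fiberwise_of_maps_to (fun i _ => Finset.mem_image_of_mem p
            (Finset.mem_univ i)) _).symm
      _ ≤ ∏ q ∈ T, g q ω := by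
          refine Finset.prod_le_prod (fun q hq => Finset.prod_nonneg fun i _ =>
            pow_nonneg (abs_nonneg _) _) ?_
          intro q hq
          have hfib : (∏ i ∈ Finset.univ.filter (fun i => p i = q), t (p i) ^ (r i))
              = t q ^ (∑ i ∈ Finset.univ.filter (fun i => p i = q), r i) := by
            rw [← Finset.prod_pow_eq_pow_sum]
            exact Finset.prod_congr rfl fun i hi => by
              rw [(Finset.mem_filter.1 hi).2]
          obtain ⟨i0, _, hi0⟩ := Finset.mem_image.1 (hT ▸ hq)
          have hi0mem : i0 ∈ Finset.univ.filter (fun i => p i = q) :=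
            Finset.mem_filter.2 ⟨Finset.mem_univ i0, hi0⟩
          have hsum1 : 1 ≤ ∑ i ∈ Finset.univ.filter (fun i => p i = q), r i :=
            le_trans (hr i0) (Finset.single_le_sum (fun i _ => Nat.zero_le _) hi0mem)
          calc (∏ i ∈ Finset.univ.filter (fun i => p i = q), t (p i) ^ (r i))
              = t q ^ (∑ i ∈ Finset.univ.filter (fun i => p i = q), r i) := hfib
            _ ≤ t q ^ 1 := pow_le_pow_of_le_one (ht0 q hq) (ht1 q hq) hsum1
            _ = t q := pow_one _
            _ ≤ g q ω := htg q hq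
  -- integrability of the dominating product
  have hgprodint : Integrable (fun ω => ∏ q ∈ T, g q ω) μ := by
    refine Integrable.mono' (integrable_const ((2 : ℝ) ^ T.card))
      (Finset.measurable_prod T fun q hq => hgmeas q hq).aestronglyMeasurable ?_
    have hall : ∀ᵐ ω ∂μ, ∀ q ∈ T, X q ω = 0 ∨ X q ω = 1 :=
      (Filter.eventually_all_finset _).2 fun q hq => h01 q (hTprime q hq)
    filter_upwards [hall] with ω hω
    have hb : ∀ q ∈ T, 0 ≤ g q ω ∧ g q ω ≤ 2 := by
      intro q hq
      have hq1 := hTq1 q hq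
      have hinv : (0 : ℝ) ≤ 1 / q := by positivity
      have hinv1 : (1 : ℝ) / q ≤ 1 := by rw [div_le_one (by linarith)]; exact hq1
      have h0 : 0 ≤ X q ω := by rcases hω q hq with h | h <;> simp [h]
      have h1 : X q ω ≤ 1 := by rcases hω q hq with h | h <;> simp [h]
      constructor <;> (simp only [hg]; linarith)
    rw [Real.norm_eq_abs, abs_of_nonneg (Finset.prod_nonneg fun q hq => (hb q hq).1)]
    calc (∏ q ∈ T, g q ω) ≤ ∏ q ∈ T, 2 :=
          Finset.prod_le_prod (fun q hq => (hb q hq).1) (fun q hq => (hb q hq).2)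
      _ = (2 : ℝ) ^ T.card := by rw [Finset.prod_const]
  -- independence: expectation of product factors
  have hfactor : ∫ ω, ∏ q ∈ T, g q ω ∂μ = ∏ q ∈ T, ∫ ω, g q ω ∂μ := by
    set f' : {n : ℕ // n.Prime} → Ω → ℝ := fun q ω => X q.1 ω + 1 / (q.1 : ℝ) with hf'
    have hindep' : iIndepFun f' μ := by
      have := hindep.comp (fun q : {n : ℕ // n.Prime} => fun x : ℝ => x + 1 / (q.1 : ℝ))
        (fun q => measurable_id.add_const _)
      exact this
    have hmeas' : ∀ q : {n : ℕ // n.Prime}, Measurable (f' q) := fun q =>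
      (hmeas q.1 q.2).add_const _
    have key := aux_integral_finset_prod μ f' hindep' hmeas' (T.subtype Nat.Prime)
    have lhs_eq : ∀ ω : Ω, (∏ q ∈ T.subtype Nat.Prime, f' q ω) = ∏ q ∈ T, g q ω := by
      intro ω
      rw [show (∏ q ∈ T.subtype Nat.Prime, f' q ω) =
          ∏ q ∈ T.subtype Nat.Prime, g q.1 ω from rfl]
      exact Finset.prod_subtype_of_mem (fun n => g n ω) hTprime
    have rhs_eq : (∏ q ∈ T.subtype Nat.Prime, ∫ ω, f' q ω ∂μ)
        = ∏ q ∈ T, ∫ ω, g q ω ∂μ :=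
      Finset.prod_subtype_of_mem (fun n => ∫ ω, g n ω ∂μ) hTprime
    rw [← rhs_eq, ← key]
    exact integral_congr_ae (Filter.Eventually.of_forall fun ω => (lhs_eq ω).symm)
  -- each factor's expectation is 2/q
  have hEg : ∀ q ∈ T, ∫ ω, g q ω ∂μ = 2 / q := by
    intro q hq
    rw [hg]
    rw [integral_add (hXint q (hTprime q hq)) (integrable_const _), hEX q (hTprime q hq),
      integral_const]
    simp
    ring
  -- put it all together
  have hnonneg : 0 ≤ ∫ ω, ∏ i, |B z X (p i) ω - e (p i)| ^ (r i) ∂μ :=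
    integral_nonneg fun ω => Finset.prod_nonneg fun i _ => pow_nonneg (abs_nonneg _) _
  rw [hrad, abs_of_nonneg hnonneg]
  calc (∫ ω, ∏ i, |B z X (p i) ω - e (p i)| ^ (r i) ∂μ)
      ≤ ∫ ω, ∏ q ∈ T, g q ω ∂μ := by
        refine integral_mono_of_nonneg ?_ hgprodint hptwise
        exact Filter.Eventually.of_forall fun ω =>
          Finset.prod_nonneg fun i _ => pow_nonneg (abs_nonneg _) _
    _ = ∏ q ∈ T, (2 / (q : ℝ)) := by rw [hfactor]; exact Finset.prod_congr rfl hEg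
    _ = (2 : ℝ) ^ T.card / ∏ q ∈ T, (q : ℝ) := by
        rw [Finset.prod_div_distrib, Finset.prod_const]
    _ ≤ (2 : ℝ) ^ u / ∏ q ∈ T, (q : ℝ) := by
        have hcard : T.card ≤ u := by
          calc T.card ≤ Finset.univ.card := Finset.card_image_le
            _ = u := by simp
        gcongr
        exact one_le_two
end

section
/- Fix z ≥ 0 and a positive integer u, and let p_1 < p_2 < … < p_u be primes with p_{i+1} > p_i^{e^z} for every 1 ≤ i ≤ u − 1. Then E[ B_{p_1} ⋯ B_{p_u} ] = ∏_{i=1}^{u} ( (1/p_i) · ∏_{q prime, p_i < q ≤ p_i^{e^z}} (1 − 1/q) ). Moreover, if instead p_{i+1} ≤ p_i^{e^z} for some i, then E[ B_{p_1} ⋯ B_{p_u} ] = 0. -/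
open MeasureTheory ProbabilityTheory Filter Finset
open scoped Classical ENNReal

lemma aux_integral_prod_of_indep {ι Ω : Type*} [MeasurableSpace Ω] {μ : Measure Ω}
    [IsProbabilityMeasure μ] {f : ι → Ω → ℝ}
    (hindep : iIndepFun f μ)
    (hmeas : ∀ i, Measurable (f i)) (hint : ∀ i, Integrable (f i) μ)
    (s : Finset ι) :
    Integrable (fun ω => ∏ i ∈ s, f i ω) μ ∧
      ∫ ω, ∏ i ∈ s, f i ω ∂μ = ∏ i ∈ s, ∫ ω, f i ω ∂μ := by
  classical
  induction s using Finset.induction_on with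
  | empty => simp
  | @insert a s ha ih =>
    have hprod : (fun ω => ∏ i ∈ s, f i ω) = ∏ i ∈ s, f i := by
      funext ω; simp
    have hIndep : IndepFun (f a) (fun ω => ∏ i ∈ s, f i ω) μ := by
      have h2 := hindep.indepFun_finset_prod_of_notMem hmeas ha
      rw [hprod]; exact h2.symm
    have key : (fun ω => ∏ i ∈ insert a s, f i ω)
        = f a * fun ω => ∏ i ∈ s, f i ω := by
      funext ω; simp [Finset.prod_insert ha]
    constructor
    · rw [key]; exact hIndep.integrable_mul (hint a) ih.1
    · rw [show (∫ ω, ∏ i ∈ insert a s, f i ω ∂μ) = ∫ ω, (f a * fun ω' => ∏ i ∈ s, f i ω') ω ∂μ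
        by rw [key]]
      rw [hIndep.integral_mul_eq_mul_integral (hint a).1 ih.1.1, ih.2, Finset.prod_insert ha]

theorem expectation_product_Bp (z : ℝ) (hz : 0 ≤ z) (u : ℕ) (hu : 0 < u)
    {Ω : Type*} [MeasurableSpace Ω] (μ : Measure Ω) [IsProbabilityMeasure μ]
    (X : ℕ → Ω → ℝ)
    (hmeas : ∀ p : ℕ, p.Prime → Measurable (X p))
    (hindep : iIndepFun (fun p : {p : ℕ // p.Prime} => X p.1) μ)
    (hone : ∀ p : ℕ, p.Prime → μ {ω | X p ω = 1} = ENNReal.ofReal (1 / p))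
    (hzero : ∀ p : ℕ, p.Prime → μ {ω | X p ω = 0} = ENNReal.ofReal (1 - 1 / p))
    (p : Fin u → ℕ) (hp : ∀ i, (p i).Prime) (hmono : StrictMono p) :
    ((∀ i : ℕ, ∀ hi : i + 1 < u,
        ((p ⟨i, Nat.lt_of_succ_lt hi⟩ : ℕ) : ℝ) ^ Real.exp z < ((p ⟨i + 1, hi⟩ : ℕ) : ℝ)) →
      (∫ ω, ∏ i, B z X (p i) ω ∂μ)
        = ∏ i, (1 / (p i : ℝ)) * ∏ q ∈ primesBetween z (p i), (1 - 1 / (q : ℝ))) ∧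
    ((∃ i : ℕ, ∃ hi : i + 1 < u,
        ((p ⟨i + 1, hi⟩ : ℕ) : ℝ) ≤ ((p ⟨i, Nat.lt_of_succ_lt hi⟩ : ℕ) : ℝ) ^ Real.exp z) →
      (∫ ω, ∏ i, B z X (p i) ω ∂μ) = 0) := by
  classical
  have hA : ∀ q : ℕ, q.Prime → MeasurableSet {ω | X q ω = 1} := fun q hq =>
    (hmeas q hq) (measurableSet_singleton 1)
  have hA0 : ∀ q : ℕ, q.Prime → MeasurableSet {ω | X q ω = 0} := fun q hq =>
    (hmeas q hq) (measurableSet_singleton 0)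
  have hq1 : ∀ q : ℕ, q.Prime → (1:ℝ)/q ≤ 1 := by
    intro q hq
    rw [div_le_one (by exact_mod_cast hq.pos)]
    exact_mod_cast hq.one_lt.le
  have hae : ∀ q : ℕ, q.Prime → ∀ᵐ ω ∂μ, X q ω = 0 ∨ X q ω = 1 := by
    intro q hq
    have hd : Disjoint {ω | X q ω = 0} {ω | X q ω = 1} := by
      rw [Set.disjoint_left]
      intro ω h0 h1
      simp only [Set.mem_setOf_eq] at h0 h1
      rw [h0] at h1; norm_num at h1
    have hu1 : μ ({ω | X q ω = 0} ∪ {ω | X q ω = 1}) = 1 := by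
      rw [measure_union hd (hA q hq), hzero q hq, hone q hq,
        ← ENNReal.ofReal_add (by linarith [hq1 q hq]) (by positivity)]
      norm_num
    have hc : μ ({ω | X q ω = 0} ∪ {ω | X q ω = 1})ᶜ = 0 := by
      rw [measure_compl ((hA0 q hq).union (hA q hq)) (measure_ne_top _ _), hu1,
        measure_univ, tsub_self]
    have hset : {ω | ¬(X q ω = 0 ∨ X q ω = 1)} = ({ω | X q ω = 0} ∪ {ω | X q ω = 1})ᶜ := by
      ext ω; simp [not_or]
    rw [ae_iff, hset]; exact hc
  have haeInd : ∀ q : ℕ, q.Prime →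
      X q =ᵐ[μ] ({ω | X q ω = 1}).indicator (fun _ => (1:ℝ)) := by
    intro q hq
    filter_upwards [hae q hq] with ω hω
    rcases hω with h | h
    · rw [h, Set.indicator_of_notMem (by simp [h])]
    · rw [h, Set.indicator_of_mem (by exact h)]
  have hintX : ∀ q : ℕ, q.Prime → Integrable (X q) μ := fun q hq =>
    ((integrable_const (1:ℝ)).indicator (hA q hq)).congr (haeInd q hq).symm
  have hvalX : ∀ q : ℕ, q.Prime → ∫ ω, X q ω ∂μ = 1/(q:ℝ) := by
    intro q hq
    rw [integral_congr_ae (haeInd q hq), integral_indicator_const _ (hA q hq), measureReal_def, hone q hq,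
      ENNReal.toReal_ofReal (by positivity)]
    simp
  have hval1X : ∀ q : ℕ, q.Prime → ∫ ω, (1 - X q ω) ∂μ = 1 - 1/(q:ℝ) := by
    intro q hq
    rw [integral_sub (integrable_const 1) (hintX q hq), integral_const, hvalX q hq]
    simp
  have hmem : ∀ m q : ℕ, q ∈ primesBetween z m ↔
      q.Prime ∧ m < q ∧ (q:ℝ) ≤ (m:ℝ) ^ Real.exp z := by
    intro m q
    simp only [primesBetween, Finset.mem_filter, Finset.mem_range, Nat.lt_succ_iff]
    rw [Nat.le_floor_iff (by positivity)]
    tauto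
  constructor
  · -- main case
    intro hgap
    have hgap' : ∀ i j : Fin u, i < j → ((p i : ℕ):ℝ) ^ Real.exp z < ((p j : ℕ):ℝ) := by
      intro i j hij
      have hij' : (i:ℕ) < (j:ℕ) := hij
      have hju := j.isLt
      have h1 : (i:ℕ) + 1 < u := by omega
      have h2 := hgap (i:ℕ) h1
      have h3 : p ⟨(i:ℕ)+1, h1⟩ ≤ p j := hmono.monotone (by
        rw [Fin.le_def]; simpa using hij')
      calc ((p i : ℕ):ℝ) ^ Real.exp z < ((p ⟨(i:ℕ)+1, h1⟩ : ℕ):ℝ) := by simpa using h2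
        _ ≤ _ := by exact_mod_cast h3
    -- the blocks
    set S : Fin u → Finset ℕ := fun i => insert (p i) (primesBetween z (p i)) with hS_def
    have hub : ∀ i : Fin u, ∀ a ∈ S i, (a:ℝ) ≤ ((p i : ℕ):ℝ) ^ Real.exp z := by
      intro i a hai
      rcases Finset.mem_insert.mp hai with rfl | hm
      · calc ((p i : ℕ):ℝ) = ((p i : ℕ):ℝ) ^ (1:ℝ) := (Real.rpow_one _).symm
          _ ≤ _ := Real.rpow_le_rpow_of_exponent_le
              (by exact_mod_cast (hp i).one_lt.le) (Real.one_le_exp hz)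
      · exact ((hmem _ _).mp hm).2.2
    have hlb : ∀ i : Fin u, ∀ a ∈ S i, p i ≤ a := by
      intro i a hai
      rcases Finset.mem_insert.mp hai with rfl | hm
      · exact le_refl _
      · exact ((hmem _ _).mp hm).2.1.le
    have hprime : ∀ i : Fin u, ∀ a ∈ S i, a.Prime := by
      intro i a hai
      rcases Finset.mem_insert.mp hai with rfl | hm
      · exact hp i
      · exact ((hmem _ _).mp hm).1
    have hlt : ∀ i j : Fin u, i < j → ∀ a ∈ S i, ∀ b ∈ S j, a < b := by
      intro i j hij a ha b hb
      have : (a:ℝ) < (b:ℝ) := lt_of_le_of_lt (hub i a ha)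
        (lt_of_lt_of_le (hgap' i j hij) (by exact_mod_cast hlb j b hb))
      exact_mod_cast this
    have hdisj : ∀ i ∈ (Finset.univ : Finset (Fin u)), ∀ j ∈ Finset.univ, i ≠ j →
        Disjoint (S i) (S j) := by
      intro i _ j _ hij
      rw [Finset.disjoint_left]
      intro a hai haj
      rcases lt_or_gt_of_ne hij with h | h
      · exact lt_irrefl a (hlt i j h a hai a haj)
      · exact lt_irrefl a (hlt j i h a haj a hai)
    have hnotrange : ∀ i : Fin u, ∀ q ∈ primesBetween z (p i), ¬ ∃ j : Fin u, p j = q := by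
      rintro i q hq ⟨j, rfl⟩
      rcases lt_trichotomy j i with h | h | h
      · have h1 : p j ≤ p i := hmono.monotone h.le
        have h2 : p i < p j := ((hmem _ _).mp hq).2.1
        omega
      · subst h
        exact lt_irrefl _ ((hmem _ _).mp hq).2.1
      · exact lt_irrefl _ (hlt i j h (p j) (Finset.mem_insert_of_mem hq) (p j)
          (Finset.mem_insert_self _ _))
    set h : ℕ → ℝ → ℝ := fun q x => if ∃ j : Fin u, p j = q then x else 1 - x with hh_def
    have hpnotmem : ∀ i : Fin u, p i ∉ primesBetween z (p i) := by
      intro i hc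
      exact lt_irrefl _ ((hmem _ _).mp hc).2.1
    have hB : ∀ i : Fin u, ∀ ω, B z X (p i) ω = ∏ q ∈ S i, h q (X q ω) := by
      intro i ω
      rw [hS_def]
      rw [Finset.prod_insert (hpnotmem i)]
      simp only [hh_def]
      rw [if_pos ⟨i, rfl⟩, B]
      congr 1
      refine Finset.prod_congr rfl (fun q hq => ?_)
      rw [if_neg (hnotrange i q hq)]
    set T : Finset ℕ := Finset.univ.biUnion S with hT_def
    have hTprime : ∀ q ∈ T, q.Prime := by
      intro q hq
      rcases Finset.mem_biUnion.mp hq with ⟨i, _, hqi⟩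
      exact hprime i q hqi
    set T' : Finset {q : ℕ // q.Prime} :=
      T.attach.image (fun x => (⟨x.1, hTprime x.1 x.2⟩ : {q : ℕ // q.Prime})) with hT'_def
    have himg : ∀ F : ℕ → ℝ, ∏ x ∈ T', F x.1 = ∏ q ∈ T, F q := by
      intro F
      rw [hT'_def, Finset.prod_image (by
        intro x _ y _ hxy
        exact Subtype.ext (Subtype.mk_eq_mk.mp hxy))]
      exact Finset.prod_attach T F
    set Y : {q : ℕ // q.Prime} → Ω → ℝ := fun q ω => h q.1 (X q.1 ω) with hY_def
    have hhmeas : ∀ q : ℕ, Measurable (h q) := by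
      intro q
      rw [hh_def]
      by_cases hc : ∃ j : Fin u, p j = q
      · simp only [if_pos hc]; exact measurable_id
      · simp only [if_neg hc]; exact measurable_const.sub measurable_id
    have hYmeas : ∀ q : {q : ℕ // q.Prime}, Measurable (Y q) := fun q =>
      (hhmeas q.1).comp (hmeas q.1 q.2)
    have hYindep : iIndepFun Y μ :=
      hindep.comp (fun q => h q.1) (fun q => hhmeas q.1)
    have hYint : ∀ q : {q : ℕ // q.Prime}, Integrable (Y q) μ := by
      intro q
      rw [hY_def]
      simp only [hh_def]
      by_cases hc : ∃ j : Fin u, p j = q.1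
      · simp only [if_pos hc]; exact hintX q.1 q.2
      · simp only [if_neg hc]; exact (integrable_const 1).sub (hintX q.1 q.2)
    have hYval : ∀ q : {q : ℕ // q.Prime}, ∫ ω, Y q ω ∂μ = h q.1 (1/(q.1:ℝ)) := by
      intro q
      rw [hY_def]
      simp only [hh_def]
      by_cases hc : ∃ j : Fin u, p j = q.1
      · simp only [if_pos hc]; exact hvalX q.1 q.2
      · simp only [if_neg hc]; exact hval1X q.1 q.2
    have hmain := (aux_integral_prod_of_indep hYindep hYmeas hYint T').2
    have hLHS : ∀ ω, ∏ x ∈ T', Y x ω = ∏ i, B z X (p i) ω := by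
      intro ω
      rw [himg (fun q => h q (X q ω)), hT_def, Finset.prod_biUnion hdisj]
      exact Finset.prod_congr rfl (fun i _ => (hB i ω).symm)
    have hRHS : ∏ x ∈ T', ∫ ω, Y x ω ∂μ
        = ∏ i, (1 / ((p i : ℕ):ℝ)) * ∏ q ∈ primesBetween z (p i), (1 - 1 / (q:ℝ)) := by
      rw [Finset.prod_congr rfl (fun x _ => hYval x), himg (fun q => h q (1/(q:ℝ))),
        hT_def, Finset.prod_biUnion hdisj]
      refine Finset.prod_congr rfl (fun i _ => ?_)
      rw [hS_def]
      rw [Finset.prod_insert (hpnotmem i)]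
      simp only [hh_def]
      rw [if_pos ⟨i, rfl⟩]
      congr 1
      refine Finset.prod_congr rfl (fun q hq => ?_)
      rw [if_neg (hnotrange i q hq)]
    calc (∫ ω, ∏ i, B z X (p i) ω ∂μ) = ∫ ω, ∏ x ∈ T', Y x ω ∂μ := by
          refine integral_congr_ae (Filter.Eventually.of_forall (fun ω => ?_))
          exact (hLHS ω).symm
      _ = ∏ x ∈ T', ∫ ω, Y x ω ∂μ := hmain
      _ = _ := hRHS
  · -- degenerate case
    rintro ⟨i, hi, hle⟩
    set a : Fin u := ⟨i, Nat.lt_of_succ_lt hi⟩ with ha_def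
    set b : Fin u := ⟨i+1, hi⟩ with hb_def
    have hab : a < b := by simp [ha_def, hb_def, Fin.lt_def]
    have hmemb : p b ∈ primesBetween z (p a) := by
      rw [hmem]; exact ⟨hp b, hmono hab, hle⟩
    have hz0 : ∫ ω, ∏ i, B z X (p i) ω ∂μ = ∫ _ω, (0:ℝ) ∂μ := by
      apply integral_congr_ae
      filter_upwards [hae (p b) (hp b)] with ω hω
      rcases hω with h0 | h1
      · exact Finset.prod_eq_zero (Finset.mem_univ b) (by simp [B, h0])
      · refine Finset.prod_eq_zero (Finset.mem_univ a) ?_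
        simp only [B]
        rw [Finset.prod_eq_zero hmemb (by rw [h1]; ring), mul_zero]
    rw [hz0, integral_zero]
end

section
/- Fix z ≥ 0 and a positive integer u. Let p_1 < p_2 < … < p_u ≤ N be primes with p_{i+1} > p_i^{e^z} for all 1 ≤ i ≤ u − 1, where N ≥ 2 and n ≥ 3 are such that N ≤ n. Then (1/n) · #{ 1 ≤ m ≤ n : δ_{p_1,z}(m) = δ_{p_2,z}(m) = … = δ_{p_u,z}(m) = 1 } = ( ∏_{i=1}^{u} (1/p_i) · ∏_{q prime, p_i < q ≤ p_i^{e^z}} (1 − 1/q) ) · ( 1 + O( e^{ −(log n)/(4 e^z log N) } ) ) + O( n^{−1/2} ), with implied constants depending at most on u and z. -/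
open MeasureTheory ProbabilityTheory Filter Finset
open scoped Classical ENNReal

set_option maxHeartbeats 1600000

/-- `δ_{p,z}(m) = 1` if `p ∣ m` and no prime `q` with `p < q ≤ p^{e^z}` divides `m`, else `0`. -/
noncomputable def deltaPZ (z : ℝ) (p m : ℕ) : ℕ :=
  if p ∣ m ∧ ∀ q : ℕ, q.Prime → p < q → (q : ℝ) ≤ (p : ℝ) ^ Real.exp z → ¬ q ∣ m then 1 else 0

lemma mem_primesBetween {z : ℝ} {p q : ℕ} :
    q ∈ primesBetween z p ↔ q.Prime ∧ p < q ∧ (q : ℝ) ≤ (p : ℝ) ^ Real.exp z := by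
  unfold primesBetween
  rw [Finset.mem_filter, Finset.mem_range, Nat.lt_succ_iff, Nat.le_floor_iff (by positivity)]
  tauto

lemma deltaPZ_eq_one_iff {z : ℝ} {p m : ℕ} :
    deltaPZ z p m = 1 ↔ p ∣ m ∧ ∀ q ∈ primesBetween z p, ¬ q ∣ m := by
  unfold deltaPZ
  split_ifs with h
  · refine ⟨fun _ => ⟨h.1, fun q hq => ?_⟩, fun _ => rfl⟩
    obtain ⟨h1, h2, h3⟩ := mem_primesBetween.mp hq
    exact h.2 q h1 h2 h3
  · constructor
    · intro h01; exact absurd h01 (by norm_num)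
    · intro hc
      exact absurd ⟨hc.1, fun q h1 h2 h3 => hc.2 q (mem_primesBetween.mpr ⟨h1, h2, h3⟩)⟩ h

/-- Product of prime powers with pairwise distinct prime bases divides `n` if each does. -/
lemma prod_pow_primes_dvd (s : Finset ℕ) (hs : ∀ q ∈ s, q.Prime) (e : ℕ → ℕ) (n : ℕ)
    (hn : ∀ q ∈ s, q ^ e q ∣ n) : (∏ q ∈ s, q ^ e q) ∣ n := by
  induction s using Finset.induction_on with
  | empty => simpa using one_dvd n
  | @insert a s ha ih =>
      rw [Finset.prod_insert ha]
      have hap : a.Prime := hs a (Finset.mem_insert_self a s)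
      have hcop : Nat.Coprime (a ^ e a) (∏ q ∈ s, q ^ e q) := by
        apply Nat.Coprime.pow_left
        apply Nat.Coprime.prod_right
        intro q hq
        have hqp : q.Prime := hs q (Finset.mem_insert_of_mem hq)
        have hne : a ≠ q := fun h => ha (h ▸ hq)
        exact Nat.Coprime.pow_right _ ((Nat.coprime_primes hap hqp).mpr hne)
      exact Nat.Coprime.mul_dvd_of_dvd_of_dvd hcop
        (hn a (Finset.mem_insert_self a s))
        (ih (fun q hq => hs q (Finset.mem_insert_of_mem hq))
            (fun q hq => hn q (Finset.mem_insert_of_mem hq)))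

/-- Mertens-type estimate: `∑_{q ≤ y} log q / q ≤ log y + log 4`. -/
lemma mertens_sum_log (y : ℕ) (hy : 2 ≤ y) :
    ∑ q ∈ (Finset.range (y + 1)).filter Nat.Prime, Real.log q / q
      ≤ Real.log y + Real.log 4 := by
  set S := (Finset.range (y + 1)).filter Nat.Prime with hS
  have hyR : (0 : ℝ) < y := by exact_mod_cast Nat.lt_of_lt_of_le Nat.zero_lt_two hy
  have hprime : ∀ q ∈ S, Nat.Prime q := fun q hq => (Finset.mem_filter.mp hq).2
  have hq1R : ∀ q ∈ S, (1 : ℝ) ≤ q := fun q hq => by exact_mod_cast (hprime q hq).one_lt.le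
  -- Step A: ∏ q^(y/q) ∣ y!
  have hdvd : (∏ q ∈ S, q ^ (y / q)) ∣ Nat.factorial y := by
    apply prod_pow_primes_dvd S hprime
    intro q hq
    have hpq := hprime q hq
    rw [Nat.Prime.pow_dvd_factorial_iff hpq
      (lt_of_le_of_lt (Nat.log_le_self q y) (Nat.lt_succ_self y))]
    calc y / q = y / q ^ 1 := by rw [pow_one]
    _ ≤ ∑ i ∈ Finset.Ico 1 (y + 1), y / q ^ i :=
        Finset.single_le_sum (f := fun i => y / q ^ i) (fun i _ => Nat.zero_le _)
          (Finset.mem_Ico.mpr ⟨le_refl 1, by omega⟩)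
  -- Step B: ∑ (y/q) log q ≤ y log y
  have hlogM : ∑ q ∈ S, ((y / q : ℕ) : ℝ) * Real.log q ≤ (y : ℝ) * Real.log y := by
    have h1 : ((∏ q ∈ S, q ^ (y / q) : ℕ) : ℝ) ≤ ((Nat.factorial y : ℕ) : ℝ) := by
      exact_mod_cast Nat.le_of_dvd (Nat.factorial_pos y) hdvd
    have hMpos : (0 : ℝ) < ((∏ q ∈ S, q ^ (y / q) : ℕ) : ℝ) := by
      have : 0 < ∏ q ∈ S, q ^ (y / q) :=
        Finset.prod_pos (fun q hq => pow_pos (hprime q hq).pos _)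
      exact_mod_cast this
    have h2 : Real.log ((∏ q ∈ S, q ^ (y / q) : ℕ) : ℝ) ≤ Real.log (Nat.factorial y : ℕ) :=
      Real.log_le_log hMpos h1
    have h3 : Real.log ((∏ q ∈ S, q ^ (y / q) : ℕ) : ℝ)
        = ∑ q ∈ S, ((y / q : ℕ) : ℝ) * Real.log q := by
      push_cast
      rw [Real.log_prod (fun q hq => by
        have := hq1R q hq; positivity)]
      refine Finset.sum_congr rfl fun q hq => ?_
      rw [Real.log_pow]
    have h4 : Real.log (Nat.factorial y : ℕ) ≤ (y : ℝ) * Real.log y := by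
      have hfle : ((Nat.factorial y : ℕ) : ℝ) ≤ ((y ^ y : ℕ) : ℝ) := by
        exact_mod_cast Nat.factorial_le_pow y
      have := Real.log_le_log (by exact_mod_cast Nat.factorial_pos y) hfle
      rwa [show ((y ^ y : ℕ) : ℝ) = (y : ℝ) ^ y by push_cast; ring, Real.log_pow] at this
    rw [← h3]; exact h2.trans h4
  -- Step C: θ(y) ≤ y log 4
  have htheta : ∑ q ∈ S, Real.log q ≤ (y : ℝ) * Real.log 4 := by
    have h := primorial_le_4_pow y
    have hppos : (0 : ℝ) < ((primorial y : ℕ) : ℝ) := by exact_mod_cast primorial_pos y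
    have h1 : ((primorial y : ℕ) : ℝ) ≤ ((4 ^ y : ℕ) : ℝ) := by exact_mod_cast h
    have h2 : Real.log ((primorial y : ℕ) : ℝ) ≤ Real.log ((4 : ℝ) ^ y) := by
      refine (Real.log_le_log hppos h1).trans_eq ?_
      push_cast; ring_nf
    rw [Real.log_pow] at h2
    have h3 : Real.log ((primorial y : ℕ) : ℝ) = ∑ q ∈ S, Real.log q := by
      rw [primorial]
      push_cast
      exact Real.log_prod (fun q hq => by
        have : (1 : ℝ) ≤ q := hq1R q hq; positivity)
    rw [h3] at h2; exact h2
  -- Step D: per-term comparison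
  have hper : ∀ q ∈ S, (y : ℝ) / q * Real.log q
      ≤ ((y / q : ℕ) : ℝ) * Real.log q + Real.log q := by
    intro q hq
    have hlq : 0 ≤ Real.log q := Real.log_nonneg (hq1R q hq)
    have hfl : (y : ℝ) / q - 1 ≤ ((y / q : ℕ) : ℝ) := by
      have h := Nat.sub_one_lt_floor ((y : ℝ) / q)
      rw [Nat.floor_div_natCast, Nat.floor_natCast] at h
      exact h.le
    nlinarith
  have hsum : ∑ q ∈ S, (y : ℝ) / q * Real.log q
      ≤ (y : ℝ) * Real.log y + (y : ℝ) * Real.log 4 := by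
    calc ∑ q ∈ S, (y : ℝ) / q * Real.log q
        ≤ ∑ q ∈ S, (((y / q : ℕ) : ℝ) * Real.log q + Real.log q) := Finset.sum_le_sum hper
      _ = (∑ q ∈ S, ((y / q : ℕ) : ℝ) * Real.log q) + ∑ q ∈ S, Real.log q :=
          Finset.sum_add_distrib
      _ ≤ (y : ℝ) * Real.log y + (y : ℝ) * Real.log 4 := add_le_add hlogM htheta
  have heq : ∑ q ∈ S, Real.log q / q = (∑ q ∈ S, (y : ℝ) / q * Real.log q) / y := by
    rw [Finset.sum_div]
    refine Finset.sum_congr rfl fun q hq => ?_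
    have hq0 : (0 : ℝ) < q := lt_of_lt_of_le one_pos (hq1R q hq)
    field_simp
  rw [heq, div_le_iff₀ hyR]
  linarith

/-- Mertens estimate on the interval `(p, p^{e^z}]`. -/
lemma mertens_interval {z : ℝ} (hz : 0 ≤ z) {p : ℕ} (hp : p.Prime) :
    ∑ q ∈ primesBetween z p, 1 / (q : ℝ) ≤ Real.exp z + 2 := by
  set y := ⌊(p : ℝ) ^ Real.exp z⌋₊ with hy
  have hp2 : 2 ≤ p := hp.two_le
  have hpR : (1 : ℝ) ≤ p := by exact_mod_cast hp.one_lt.le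
  have hple : (p : ℝ) ≤ (p : ℝ) ^ Real.exp z := by
    calc (p : ℝ) = (p : ℝ) ^ (1 : ℝ) := (Real.rpow_one _).symm
    _ ≤ (p : ℝ) ^ Real.exp z :=
        Real.rpow_le_rpow_of_exponent_le hpR (Real.one_le_exp hz)
  have hpy : p ≤ y := Nat.le_floor hple
  have hy2 : 2 ≤ y := hp2.trans hpy
  have hyR : (0 : ℝ) < y := by exact_mod_cast Nat.lt_of_lt_of_le Nat.zero_lt_two hy2
  have hyle : (y : ℝ) ≤ (p : ℝ) ^ Real.exp z := Nat.floor_le (by positivity)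
  have hlogp : 0 < Real.log p := Real.log_pos (by exact_mod_cast hp.one_lt)
  have hsub : primesBetween z p ⊆ (Finset.range (y + 1)).filter Nat.Prime := by
    intro q hq
    obtain ⟨h1, _, h3⟩ := mem_primesBetween.mp hq
    exact Finset.mem_filter.mpr ⟨Finset.mem_range.mpr (Nat.lt_succ_of_le (Nat.le_floor h3)), h1⟩
  have hterm : ∀ q ∈ primesBetween z p, 1 / (q : ℝ) ≤ (Real.log q / q) / Real.log p := by
    intro q hq
    obtain ⟨h1, h2, _⟩ := mem_primesBetween.mp hq
    have hq0 : (0 : ℝ) < q := by exact_mod_cast h1.pos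
    have hlog : Real.log p ≤ Real.log q :=
      Real.log_le_log (by exact_mod_cast hp.pos) (by exact_mod_cast h2.le)
    rw [le_div_iff₀ hlogp]
    calc 1 / (q : ℝ) * Real.log p = Real.log p / q := by ring
    _ ≤ Real.log q / q := (div_le_div_iff_of_pos_right hq0).mpr hlog
  calc ∑ q ∈ primesBetween z p, 1 / (q : ℝ)
      ≤ ∑ q ∈ primesBetween z p, (Real.log q / q) / Real.log p := Finset.sum_le_sum hterm
    _ = (∑ q ∈ primesBetween z p, Real.log q / q) / Real.log p := by rw [Finset.sum_div]
    _ ≤ (∑ q ∈ (Finset.range (y + 1)).filter Nat.Prime, Real.log q / q) / Real.log p := by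
        refine (div_le_div_iff_of_pos_right hlogp).mpr ?_
        refine Finset.sum_le_sum_of_subset_of_nonneg hsub fun q hq _ => ?_
        have hq1 : (1 : ℝ) ≤ q := by exact_mod_cast (Finset.mem_filter.mp hq).2.one_lt.le
        have := Real.log_nonneg hq1
        positivity
    _ ≤ (Real.log y + Real.log 4) / Real.log p := by
        exact (div_le_div_iff_of_pos_right hlogp).mpr (mertens_sum_log y hy2)
    _ ≤ Real.exp z + 2 := by
        have h1 : Real.log y ≤ Real.exp z * Real.log p := by
          calc Real.log y ≤ Real.log ((p : ℝ) ^ Real.exp z) := Real.log_le_log hyR hyle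
          _ = Real.exp z * Real.log p := Real.log_rpow (by positivity) _
        have h2 : Real.log 4 ≤ 2 * Real.log p := by
          have h4 : (4 : ℝ) = 2 ^ (2 : ℕ) := by norm_num
          have hl2 : Real.log 2 ≤ Real.log p := Real.log_le_log two_pos (by exact_mod_cast hp2)
          rw [h4, Real.log_pow]
          push_cast
          linarith
        rw [div_le_iff₀ hlogp]
        linarith

/-- Inclusion–exclusion counting identity. -/
lemma count_IE (n : ℕ) : ∀ (Q : Finset ℕ), (∀ q ∈ Q, Nat.Prime q) →
    ∀ (P : ℕ), 0 < P → (∀ q ∈ Q, ¬ q ∣ P) →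
    (((Finset.Icc 1 n).filter (fun m => P ∣ m ∧ ∀ q ∈ Q, ¬ q ∣ m)).card : ℝ)
      = ∑ S ∈ Q.powerset, (-1 : ℝ) ^ S.card * ((n / (P * ∏ q ∈ S, q) : ℕ) : ℝ) := by
  intro Q
  induction Q using Finset.induction_on with
  | empty =>
      intro _ P hP _
      rw [Finset.powerset_empty, Finset.sum_singleton]
      simp only [Finset.card_empty, pow_zero, Finset.prod_empty, mul_one, one_mul]
      have h1 : ((Finset.Icc 1 n).filter (fun m => P ∣ m ∧ ∀ q ∈ (∅ : Finset ℕ), ¬ q ∣ m))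
          = (Finset.Icc 1 n).filter (fun m => P ∣ m) := by
        apply Finset.filter_congr; intro m _; simp
      rw [h1, show Finset.Icc 1 n = Finset.Ioc 0 n from Finset.Icc_add_one_left_eq_Ioc 0 n,
        Nat.Ioc_filter_dvd_card_eq_div]
  | @insert a s ha ih =>
      intro hQ P hP hPd
      have hap : a.Prime := hQ a (Finset.mem_insert_self a s)
      have hsp : ∀ q ∈ s, q.Prime := fun q hq => hQ q (Finset.mem_insert_of_mem hq)
      have hcop : Nat.Coprime P a :=
        ((hap.coprime_iff_not_dvd).mpr (hPd a (Finset.mem_insert_self a s))).symm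
      have hsplit : ((Finset.Icc 1 n).filter (fun m => P ∣ m ∧ ∀ q ∈ insert a s, ¬ q ∣ m))
          = ((Finset.Icc 1 n).filter (fun m => P ∣ m ∧ ∀ q ∈ s, ¬ q ∣ m)).filter
              (fun m => ¬ a ∣ m) := by
        rw [Finset.filter_filter]
        apply Finset.filter_congr; intro m _
        simp only [Finset.forall_mem_insert]
        tauto
      have hsplit2 : ((Finset.Icc 1 n).filter (fun m => P ∣ m ∧ ∀ q ∈ s, ¬ q ∣ m)).filter
            (fun m => a ∣ m)
          = (Finset.Icc 1 n).filter (fun m => P * a ∣ m ∧ ∀ q ∈ s, ¬ q ∣ m) := by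
        rw [Finset.filter_filter]
        apply Finset.filter_congr; intro m _
        constructor
        · rintro ⟨⟨h1, h2⟩, h3⟩
          exact ⟨Nat.Coprime.mul_dvd_of_dvd_of_dvd hcop h1 h3, h2⟩
        · rintro ⟨h1, h2⟩
          exact ⟨⟨dvd_trans (dvd_mul_right P a) h1, h2⟩, dvd_trans (dvd_mul_left a P) h1⟩
      have hcards := Finset.card_filter_add_card_filter_not
        (s := (Finset.Icc 1 n).filter (fun m => P ∣ m ∧ ∀ q ∈ s, ¬ q ∣ m))
        (p := fun m => a ∣ m)
      have ih1 := ih hsp P hP (fun q hq => hPd q (Finset.mem_insert_of_mem hq))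
      have ih2 : (((Finset.Icc 1 n).filter (fun m => P * a ∣ m ∧ ∀ q ∈ s, ¬ q ∣ m)).card : ℝ)
          = ∑ S ∈ s.powerset, (-1 : ℝ) ^ S.card * ((n / (P * a * ∏ q ∈ S, q) : ℕ) : ℝ) := by
        apply ih hsp (P * a) (Nat.mul_pos hP hap.pos)
        intro q hq hdvd
        rcases (Nat.Prime.dvd_mul (hsp q hq)).mp hdvd with h | h
        · exact hPd q (Finset.mem_insert_of_mem hq) h
        · exact ha (((Nat.prime_dvd_prime_iff_eq (hsp q hq) hap).mp h) ▸ hq)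
      have hLHS : (((Finset.Icc 1 n).filter
            (fun m => P ∣ m ∧ ∀ q ∈ insert a s, ¬ q ∣ m)).card : ℝ)
          = (((Finset.Icc 1 n).filter (fun m => P ∣ m ∧ ∀ q ∈ s, ¬ q ∣ m)).card : ℝ)
            - (((Finset.Icc 1 n).filter (fun m => P * a ∣ m ∧ ∀ q ∈ s, ¬ q ∣ m)).card : ℝ) := by
        rw [hsplit, ← hsplit2]
        have := hcards
        push_cast [← this]
        ring
      rw [hLHS, ih1, ih2]
      rw [Finset.sum_powerset_insert (β := ℝ) ha
        (fun S => (-1 : ℝ) ^ S.card * ((n / (P * ∏ q ∈ S, q) : ℕ) : ℝ))]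
      have hins : ∑ S ∈ s.powerset,
            (fun S => (-1 : ℝ) ^ S.card * ((n / (P * ∏ q ∈ S, q) : ℕ) : ℝ)) (insert a S)
          = - ∑ S ∈ s.powerset, (-1 : ℝ) ^ S.card * ((n / (P * a * ∏ q ∈ S, q) : ℕ) : ℝ) := by
        rw [← Finset.sum_neg_distrib]
        refine Finset.sum_congr rfl fun S hS => ?_
        have haS : a ∉ S := fun h => ha (Finset.mem_powerset.mp hS h)
        simp only [Finset.card_insert_of_notMem haS, Finset.prod_insert haS, pow_succ]
        have hmm : P * (a * ∏ q ∈ S, q) = P * a * ∏ q ∈ S, q := by ring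
        rw [hmm]
        ring
      rw [hins]
      ring

/-- Sum over powerset of products equals product of `1 +`. -/
lemma sum_powerset_prod (Q : Finset ℕ) (g : ℕ → ℝ) :
    ∑ S ∈ Q.powerset, ∏ q ∈ S, g q = ∏ q ∈ Q, (1 + g q) := by
  have h := Finset.prod_add g (fun _ => (1 : ℝ)) Q
  simp only [Finset.prod_const_one, mul_one] at h
  calc ∑ S ∈ Q.powerset, ∏ q ∈ S, g q = ∏ q ∈ Q, (g q + 1) := h.symm
    _ = ∏ q ∈ Q, (1 + g q) := Finset.prod_congr rfl fun q _ => add_comm _ _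

/-- Floor error bound with Rankin-style exponent. -/
lemma floor_err {n d : ℕ} (hn : 0 < n) (hd : 0 < d) {e : ℝ} (he0 : 0 ≤ e) (he1 : e ≤ 1) :
    |((n / d : ℕ) : ℝ) - (n : ℝ) / d| ≤ ((n : ℝ) / d) ^ (1 - e) := by
  set x : ℝ := (n : ℝ) / d with hx
  have hx0 : 0 < x := by
    have h1 : (0:ℝ) < n := by exact_mod_cast hn
    have h2 : (0:ℝ) < d := by exact_mod_cast hd
    positivity
  have hfl : ((n / d : ℕ) : ℝ) = (⌊x⌋₊ : ℝ) := by
    rw [hx, Nat.floor_div_natCast, Nat.floor_natCast]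
  have h1 : (⌊x⌋₊ : ℝ) ≤ x := Nat.floor_le hx0.le
  have h2 : x - 1 < (⌊x⌋₊ : ℝ) := Nat.sub_one_lt_floor x
  have h3 : (0:ℝ) ≤ (⌊x⌋₊ : ℝ) := by positivity
  have habs : |((n / d : ℕ) : ℝ) - x| ≤ min 1 x := by
    rw [hfl, abs_sub_comm, abs_of_nonneg (by linarith)]
    exact le_min (by linarith) (by linarith)
  rcases le_or_gt 1 x with h | h
  · refine habs.trans ((min_le_left _ _).trans ?_)
    calc (1:ℝ) = x ^ (0:ℝ) := (Real.rpow_zero x).symm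
    _ ≤ x ^ (1 - e) := Real.rpow_le_rpow_of_exponent_le h (by linarith)
  · refine habs.trans ((min_le_right _ _).trans ?_)
    calc x = x ^ (1:ℝ) := (Real.rpow_one x).symm
    _ ≤ x ^ (1 - e) := Real.rpow_le_rpow_of_exponent_ge hx0 h.le (by linarith)

/-- `exp (-(2/q)) ≤ 1 - 1/q` for `q ≥ 2`. -/
lemma exp_neg_le_one_sub {q : ℝ} (hq : 2 ≤ q) : Real.exp (-(2 / q)) ≤ 1 - 1 / q := by
  have hq0 : (0:ℝ) < q := lt_of_lt_of_le two_pos hq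
  have h1 : 1 + 2 / q ≤ Real.exp (2 / q) := by
    have := Real.add_one_le_exp (2 / q); linarith
  have h2 : (0:ℝ) < 1 + 2 / q := by positivity
  rw [Real.exp_neg]
  have h4 : (Real.exp (2 / q))⁻¹ ≤ (1 + 2 / q)⁻¹ := by
    apply inv_anti₀ h2 h1
  refine h4.trans ?_
  have key : (1:ℝ) ≤ (1 - 1 / q) * (1 + 2 / q) := by
    have hexpand : (1 - 1 / q) * (1 + 2 / q) = 1 + (q - 2) / q ^ 2 := by
      field_simp; ring
    have hnn : (0:ℝ) ≤ (q - 2) / q ^ 2 := by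
      apply div_nonneg (by linarith) (by positivity)
    rw [hexpand]; linarith
  rw [inv_eq_one_div, div_le_iff₀ h2]
  linarith [key]

theorem sieve_density (z : ℝ) (hz : 0 ≤ z) (u : ℕ) (hu : 0 < u) :
    ∃ C : ℝ, 0 < C ∧ ∀ (N : ℝ) (n : ℕ), 2 ≤ N → 3 ≤ n → N ≤ n →
      ∀ p : Fin u → ℕ, (∀ i, (p i).Prime) → StrictMono p → (∀ i, (p i : ℝ) ≤ N) →
        (∀ i : ℕ, ∀ hi : i + 1 < u,
          ((p ⟨i, Nat.lt_of_succ_lt hi⟩ : ℕ) : ℝ) ^ Real.exp z < ((p ⟨i + 1, hi⟩ : ℕ) : ℝ)) →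
        ∃ E₁ E₂ : ℝ,
          |E₁| ≤ C * Real.exp (-Real.log n / (4 * Real.exp z * Real.log N)) ∧
          |E₂| ≤ C * (n : ℝ) ^ (-(1 : ℝ) / 2) ∧
          (1 / (n : ℝ)) * (((Finset.Icc 1 n).filter fun m => ∀ i, deltaPZ z (p i) m = 1).card : ℝ)
            = (∏ i, (1 / (p i : ℝ)) * ∏ q ∈ primesBetween z (p i), (1 - 1 / (q : ℝ)))
                * (1 + E₁) + E₂ := by
  classical
  set B : ℝ := Real.exp z + 2 with hBdef
  clear_value B
  have hB2 : (2:ℝ) ≤ B := by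
    have := Real.exp_pos z; rw [hBdef]; linarith
  refine ⟨Real.exp ((u : ℝ) + 4 * (u : ℝ) * B) + 1, by positivity, ?_⟩
  intro N n hN hn3 hNn p hp hmono hpN hgap
  -- basic facts
  have hez : (1:ℝ) ≤ Real.exp z := Real.one_le_exp hz
  have hezpos : (0:ℝ) < Real.exp z := Real.exp_pos z
  have hN1 : (1:ℝ) < N := by linarith
  have hN0 : (0:ℝ) < N := by linarith
  have hlogN : 0 < Real.log N := Real.log_pos hN1
  have hn0 : 0 < n := by omega
  have hn0R : (0:ℝ) < n := by exact_mod_cast hn0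
  have hn1R : (1:ℝ) ≤ n := by exact_mod_cast hn0
  have hlogn : 0 ≤ Real.log n := Real.log_nonneg hn1R
  -- epsilon
  set ε : ℝ := 1 / (2 * Real.exp z * Real.log N) with hεdef
  clear_value ε
  have hden1 : (1:ℝ) ≤ 2 * Real.exp z * Real.log N := by
    have h4 : Real.exp 1 ≤ 4 := by
      have := Real.exp_one_lt_d9; linarith
    have hlog4 : (1:ℝ) ≤ Real.log 4 := by
      rw [show (1:ℝ) = Real.log (Real.exp 1) by rw [Real.log_exp]]
      exact Real.log_le_log (Real.exp_pos 1) h4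
    have hl2 : Real.log 4 = 2 * Real.log 2 := by
      rw [show (4:ℝ) = 2^(2:ℕ) by norm_num, Real.log_pow]; push_cast; ring
    have hlogN2 : Real.log 2 ≤ Real.log N := Real.log_le_log two_pos hN
    calc (1:ℝ) ≤ Real.log 4 := hlog4
    _ = 2 * Real.log 2 := hl2
    _ ≤ 2 * Real.log N := by linarith
    _ = 1 * (2 * Real.log N) := by ring
    _ ≤ Real.exp z * (2 * Real.log N) := by
        apply mul_le_mul_of_nonneg_right hez (by linarith)
    _ = 2 * Real.exp z * Real.log N := by ring
  have hε0 : 0 < ε := by rw [hεdef]; positivity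
  have hε1 : ε ≤ 1 := by
    rw [hεdef, div_le_one (by linarith)]; linarith
  -- the primes and their product
  set K : ℕ := ∏ i, p i with hKdef
  clear_value K
  have hKpos : 0 < K := by
    rw [hKdef]; exact Finset.prod_pos (fun i _ => (hp i).pos)
  have hKR : (0:ℝ) < K := by exact_mod_cast hKpos
  set Q : Finset ℕ := Finset.univ.biUnion (fun i => primesBetween z (p i)) with hQdef
  clear_value Q
  have hmemQ : ∀ q : ℕ, q ∈ Q ↔ ∃ i, q ∈ primesBetween z (p i) := by
    intro q; rw [hQdef]; simp [Finset.mem_biUnion]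
  -- gap facts
  have hgap' : ∀ i j : Fin u, i < j → ((p i : ℝ)) ^ Real.exp z < p j := by
    intro i j hij
    have h1 : i.val + 1 < u := lt_of_le_of_lt (Nat.succ_le_of_lt hij) j.isLt
    have h2 := hgap i.val h1
    have h3 : (⟨i.val, Nat.lt_of_succ_lt h1⟩ : Fin u) = i := by ext; rfl
    rw [h3] at h2
    refine h2.trans_le ?_
    have hle : (⟨i.val + 1, h1⟩ : Fin u) ≤ j := by
      rw [Fin.le_def]; exact Nat.succ_le_of_lt hij
    exact_mod_cast hmono.monotone hle
  have hQlt : ∀ i j : Fin u, i < j → ∀ q ∈ primesBetween z (p i), (q:ℝ) < p j :=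
    fun i j hij q hq => lt_of_le_of_lt (mem_primesBetween.mp hq).2.2 (hgap' i j hij)
  have hqne : ∀ (i : Fin u), ∀ q ∈ primesBetween z (p i), ∀ j, q ≠ p j := by
    intro i q hq j
    obtain ⟨hqp, hlt, hle⟩ := mem_primesBetween.mp hq
    rcases lt_or_ge i j with h | h
    · have hlt2 := hQlt i j h q hq
      intro he; rw [he] at hlt2; exact lt_irrefl _ hlt2
    · have hji : p j ≤ p i := hmono.monotone h
      intro he; omega
  have hdisj : ∀ i j : Fin u, i ≠ j →
      Disjoint (primesBetween z (p i)) (primesBetween z (p j)) := by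
    intro i j hij
    rw [Finset.disjoint_left]
    intro q hqi hqj
    rcases lt_or_gt_of_ne hij with h | h
    · have h1 := hQlt i j h q hqi
      have h2 : ((p j : ℕ):ℝ) < q := by exact_mod_cast (mem_primesBetween.mp hqj).2.1
      linarith
    · have h1 := hQlt j i h q hqj
      have h2 : ((p i : ℕ):ℝ) < q := by exact_mod_cast (mem_primesBetween.mp hqi).2.1
      linarith
  have hQprime : ∀ q ∈ Q, q.Prime := by
    intro q hq
    obtain ⟨i, hqi⟩ := (hmemQ q).mp hq
    exact (mem_primesBetween.mp hqi).1
  have hQ2 : ∀ q ∈ Q, 2 ≤ q := fun q hq => (hQprime q hq).two_le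
  have hQle : ∀ q ∈ Q, (q:ℝ) ≤ N ^ Real.exp z := by
    intro q hq
    obtain ⟨i, hqi⟩ := (hmemQ q).mp hq
    refine (mem_primesBetween.mp hqi).2.2.trans ?_
    exact Real.rpow_le_rpow (by positivity) (hpN i) (by positivity)
  have hQnd : ∀ q ∈ Q, ¬ q ∣ K := by
    intro q hq hdvd
    obtain ⟨i, hqi⟩ := (hmemQ q).mp hq
    rw [hKdef] at hdvd
    obtain ⟨j, _, hdj⟩ := Prime.exists_mem_finset_dvd (hQprime q hq).prime hdvd
    exact hqne i q hqi j ((Nat.prime_dvd_prime_iff_eq (hQprime q hq) (hp j)).mp hdj)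
  -- rewrite the filter
  have hKdvd_iff : ∀ m : ℕ, K ∣ m ↔ ∀ i, p i ∣ m := by
    intro m
    constructor
    · intro h i
      refine dvd_trans ?_ h
      rw [hKdef]
      exact Finset.dvd_prod_of_mem p (Finset.mem_univ i)
    · intro h
      have hKim : K = ∏ q ∈ Finset.univ.image p, q := by
        rw [hKdef, Finset.prod_image (fun a _ b _ hab => hmono.injective hab)]
      rw [hKim]
      apply Finset.prod_primes_dvd
      · intro q hq; obtain ⟨i, _, rfl⟩ := Finset.mem_image.mp hq; exact (hp i).prime
      · intro q hq; obtain ⟨i, _, rfl⟩ := Finset.mem_image.mp hq; exact h i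
  have step1 : ((Finset.Icc 1 n).filter fun m => ∀ i, deltaPZ z (p i) m = 1)
      = (Finset.Icc 1 n).filter (fun m => K ∣ m ∧ ∀ q ∈ Q, ¬ q ∣ m) := by
    apply Finset.filter_congr
    intro m _
    simp only [deltaPZ_eq_one_iff]
    constructor
    · intro h
      refine ⟨(hKdvd_iff m).mpr (fun i => (h i).1), ?_⟩
      intro q hq
      obtain ⟨i, hqi⟩ := (hmemQ q).mp hq
      exact (h i).2 q hqi
    · rintro ⟨h1, h2⟩ i
      exact ⟨(hKdvd_iff m).mp h1 i,
        fun q hq => h2 q ((hmemQ q).mpr ⟨i, hq⟩)⟩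
  -- the main product
  set Pm : ℝ := ∏ i, (1 / (p i : ℝ)) * ∏ q ∈ primesBetween z (p i), (1 - 1 / (q : ℝ))
    with hPmdef
  clear_value Pm
  have hKcast : (K:ℝ) = ∏ i, (p i : ℝ) := by rw [hKdef]; push_cast; rfl
  have hPfact : Pm = (1 / (K:ℝ)) * ∏ q ∈ Q, (1 - 1/(q:ℝ)) := by
    rw [hPmdef, Finset.prod_mul_distrib]
    congr 1
    · calc ∏ i, (1/(p i:ℝ)) = ∏ i, ((p i:ℝ))⁻¹ := by
            exact Finset.prod_congr rfl fun i _ => one_div _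
      _ = (∏ i, (p i:ℝ))⁻¹ := by rw [Finset.prod_inv_distrib]
      _ = 1/(K:ℝ) := by rw [hKcast, one_div]
    · rw [hQdef]
      exact (Finset.prod_biUnion (fun i _ j _ hij => hdisj i j hij)).symm
  have hexpand : ∑ S ∈ Q.powerset, ∏ q ∈ S, (-(1/(q:ℝ))) = ∏ q ∈ Q, (1 - 1/(q:ℝ)) := by
    rw [sum_powerset_prod]
    exact Finset.prod_congr rfl fun q _ => by ring
  have hqposS : ∀ S : Finset ℕ, S ⊆ Q → (0:ℝ) < ∏ q ∈ S, (q:ℝ) := by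
    intro S hS
    apply Finset.prod_pos
    intro q hq
    exact_mod_cast (hQprime q (hS hq)).pos
  have hsign : ∀ S : Finset ℕ, S ⊆ Q →
      ∏ q ∈ S, (-(1/(q:ℝ))) = (-1:ℝ)^S.card * (1/∏ q ∈ S, (q:ℝ)) := by
    intro S hS
    calc ∏ q ∈ S, (-(1/(q:ℝ))) = ∏ q ∈ S, ((-1) * (1/(q:ℝ))) :=
        Finset.prod_congr rfl fun q _ => by ring
    _ = (∏ _q ∈ S, (-1:ℝ)) * ∏ q ∈ S, (1/(q:ℝ)) := Finset.prod_mul_distrib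
    _ = (-1:ℝ)^S.card * (1/∏ q ∈ S, (q:ℝ)) := by
        rw [Finset.prod_const]
        congr 1
        rw [Finset.prod_div_distrib, Finset.prod_const_one]
  have hPsum : Pm = ∑ S ∈ Q.powerset, (-1:ℝ)^S.card * (1/((K:ℝ) * ∏ q ∈ S, (q:ℝ))) := by
    rw [hPfact, ← hexpand, Finset.mul_sum]
    refine Finset.sum_congr rfl fun S hS => ?_
    rw [hsign S (Finset.mem_powerset.mp hS)]
    have h0 : (0:ℝ) < ∏ q ∈ S, (q:ℝ) := hqposS S (Finset.mem_powerset.mp hS)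
    field_simp
  have hcount := count_IE n Q hQprime K hKpos hQnd
  -- the difference
  have hcastd : ∀ S : Finset ℕ, ((K * ∏ q ∈ S, q : ℕ):ℝ) = (K:ℝ) * ∏ q ∈ S, (q:ℝ) := by
    intro S; push_cast; rfl
  have hD : (1 / (n : ℝ)) *
        (((Finset.Icc 1 n).filter fun m => ∀ i, deltaPZ z (p i) m = 1).card : ℝ) - Pm
      = ∑ S ∈ Q.powerset, (-1:ℝ)^S.card *
          (((n / (K * ∏ q ∈ S, q) : ℕ):ℝ)/n - 1/((K:ℝ) * ∏ q ∈ S, (q:ℝ))) := by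
    rw [step1, hcount, hPsum, Finset.mul_sum, ← Finset.sum_sub_distrib]
    refine Finset.sum_congr rfl fun S hS => ?_
    ring
  have hterm_bound : ∀ S ∈ Q.powerset,
      |((n / (K * ∏ q ∈ S, q) : ℕ):ℝ)/n - 1/((K:ℝ) * ∏ q ∈ S, (q:ℝ))|
        ≤ ((n:ℝ)/((K:ℝ) * ∏ q ∈ S, (q:ℝ)))^(1-ε) / n := by
    intro S hS
    have hSQ := Finset.mem_powerset.mp hS
    have hprodN : 0 < ∏ q ∈ S, q :=
      Finset.prod_pos fun q hq => (hQprime q (hSQ hq)).pos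
    have hd : 0 < K * ∏ q ∈ S, q := Nat.mul_pos hKpos hprodN
    have hprodR : (0:ℝ) < ∏ q ∈ S, (q:ℝ) := hqposS S hSQ
    have hdR : (0:ℝ) < (K:ℝ) * ∏ q ∈ S, (q:ℝ) := mul_pos hKR hprodR
    have hfe := floor_err (n := n) (d := K * ∏ q ∈ S, q) hn0 hd hε0.le hε1
    rw [hcastd S] at hfe
    have heq : ((n / (K * ∏ q ∈ S, q) : ℕ):ℝ)/n - 1/((K:ℝ) * ∏ q ∈ S, (q:ℝ))
        = (((n / (K * ∏ q ∈ S, q) : ℕ):ℝ) - (n:ℝ)/((K:ℝ) * ∏ q ∈ S, (q:ℝ)))/n := by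
      rw [sub_div]
      congr 1
      rw [div_div, mul_comm ((K:ℝ) * ∏ q ∈ S, (q:ℝ)) (n:ℝ), div_mul_cancel_left₀ hn0R.ne', one_div]
    rw [heq, abs_div, abs_of_pos hn0R]
    exact div_le_div_of_nonneg_right hfe hn0R.le
  have hsum_bound : |(1 / (n : ℝ)) *
        (((Finset.Icc 1 n).filter fun m => ∀ i, deltaPZ z (p i) m = 1).card : ℝ) - Pm|
      ≤ ∑ S ∈ Q.powerset, ((n:ℝ)/((K:ℝ) * ∏ q ∈ S, (q:ℝ)))^(1-ε) / n := by
    rw [hD]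
    refine (Finset.abs_sum_le_sum_abs _ _).trans (Finset.sum_le_sum fun S hS => ?_)
    rw [abs_mul, abs_pow, abs_neg, abs_one, one_pow, one_mul]
    exact hterm_bound S hS
  have hsum_eval : ∑ S ∈ Q.powerset, ((n:ℝ)/((K:ℝ) * ∏ q ∈ S, (q:ℝ)))^(1-ε) / n
      = ((n:ℝ)/K)^(1-ε)/n * ∏ q ∈ Q, (1 + (q:ℝ)^(ε-1)) := by
    rw [← sum_powerset_prod Q (fun q => (q:ℝ)^(ε-1)), Finset.mul_sum]
    refine Finset.sum_congr rfl fun S hS => ?_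
    have hSQ := Finset.mem_powerset.mp hS
    have hprodR : (0:ℝ) < ∏ q ∈ S, (q:ℝ) := hqposS S hSQ
    have h1 : (n:ℝ)/((K:ℝ) * ∏ q ∈ S, (q:ℝ)) = ((n:ℝ)/K) * (∏ q ∈ S, (q:ℝ))⁻¹ := by
      field_simp
    have h2 : ((∏ q ∈ S, (q:ℝ)) ^ ((1:ℝ)-ε))⁻¹ = (∏ q ∈ S, (q:ℝ)) ^ (ε-1) := by
      rw [← Real.rpow_neg hprodR.le, neg_sub]
    rw [h1, Real.mul_rpow (by positivity) (by positivity), Real.inv_rpow hprodR.le, h2,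
      ← Real.finset_prod_rpow S (fun q => (q:ℝ)) (fun q _ => by positivity) (ε-1)]
    ring
  -- Mertens bounds
  have hLQ : ∑ q ∈ Q, 1/(q:ℝ) ≤ (u:ℝ) * B := by
    rw [hQdef, Finset.sum_biUnion (fun i _ j _ hij => hdisj i j hij)]
    calc ∑ i, ∑ q ∈ primesBetween z (p i), 1/(q:ℝ) ≤ ∑ _i : Fin u, B :=
        Finset.sum_le_sum fun i _ => by
          rw [hBdef]; exact mertens_interval hz (hp i)
    _ = (u:ℝ) * B := by
        rw [Finset.sum_const, Finset.card_univ, Fintype.card_fin, nsmul_eq_mul]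
  have hUB : ∏ q ∈ Q, (1 + (q:ℝ)^(ε-1)) ≤ Real.exp (2*((u:ℝ)*B)) := by
    have hstep : ∀ q ∈ Q, (1 + (q:ℝ)^(ε-1)) ≤ Real.exp (2/(q:ℝ)) := by
      intro q hq
      have hq2 : (2:ℝ) ≤ q := by exact_mod_cast hQ2 q hq
      have hq0 : (0:ℝ) < q := by linarith
      have hqe : (q:ℝ)^ε ≤ 2 := by
        have h1 : (q:ℝ)^ε ≤ (N ^ Real.exp z)^ε :=
          Real.rpow_le_rpow (by positivity) (hQle q hq) hε0.le
        have h2 : (N ^ Real.exp z)^ε = Real.exp (1/2) := by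
          rw [← Real.rpow_mul hN0.le, Real.rpow_def_of_pos hN0]
          congr 1
          rw [hεdef]; field_simp
        have h3 : Real.exp (1/2) ≤ 2 := by
          have hl2 := Real.log_two_gt_d9
          calc Real.exp (1/2) ≤ Real.exp (Real.log 2) :=
              Real.exp_le_exp.mpr (by norm_num at hl2 ⊢; linarith)
          _ = 2 := Real.exp_log two_pos
        calc (q:ℝ)^ε ≤ (N ^ Real.exp z)^ε := h1
        _ = Real.exp (1/2) := h2
        _ ≤ 2 := h3
      have hsplit : (q:ℝ)^(ε-1) = (q:ℝ)^ε / q := by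
        rw [Real.rpow_sub hq0, Real.rpow_one]
      have hle2q : (q:ℝ)^(ε-1) ≤ 2/q := by
        rw [hsplit]; exact div_le_div_of_nonneg_right hqe hq0.le
      have := Real.add_one_le_exp (2/(q:ℝ))
      linarith
    calc ∏ q ∈ Q, (1 + (q:ℝ)^(ε-1)) ≤ ∏ q ∈ Q, Real.exp (2/(q:ℝ)) :=
        Finset.prod_le_prod (fun q hq => by positivity) hstep
    _ = Real.exp (∑ q ∈ Q, 2/(q:ℝ)) := (Real.exp_sum Q _).symm
    _ ≤ Real.exp (2*((u:ℝ)*B)) := by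
        apply Real.exp_le_exp.mpr
        have h1 : ∑ q ∈ Q, 2/(q:ℝ) = 2 * ∑ q ∈ Q, 1/(q:ℝ) := by
          rw [Finset.mul_sum]
          exact Finset.sum_congr rfl fun q _ => by ring
        rw [h1]; linarith
  have hLB : Real.exp (-(2*((u:ℝ)*B))) ≤ ∏ q ∈ Q, (1 - 1/(q:ℝ)) := by
    have hstep : ∀ q ∈ Q, Real.exp (-(2/(q:ℝ))) ≤ 1 - 1/(q:ℝ) := fun q hq =>
      exp_neg_le_one_sub (by exact_mod_cast hQ2 q hq)
    have hfirst : Real.exp (-(2*((u:ℝ)*B))) ≤ Real.exp (∑ q ∈ Q, -(2/(q:ℝ))) := by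
      apply Real.exp_le_exp.mpr
      have h1 : ∑ q ∈ Q, -(2/(q:ℝ)) = -(2 * ∑ q ∈ Q, 1/(q:ℝ)) := by
        rw [Finset.mul_sum, ← Finset.sum_neg_distrib]
        exact Finset.sum_congr rfl fun q _ => by ring
      rw [h1]; linarith
    calc Real.exp (-(2*((u:ℝ)*B))) ≤ Real.exp (∑ q ∈ Q, -(2/(q:ℝ))) := hfirst
    _ = ∏ q ∈ Q, Real.exp (-(2/(q:ℝ))) := Real.exp_sum Q _
    _ ≤ ∏ q ∈ Q, (1 - 1/(q:ℝ)) :=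
        Finset.prod_le_prod (fun q hq => (Real.exp_pos _).le) hstep
  have hprodQpos : 0 < ∏ q ∈ Q, (1 - 1/(q:ℝ)) := lt_of_lt_of_le (Real.exp_pos _) hLB
  have hPmpos : 0 < Pm := by
    rw [hPfact]; exact mul_pos (by positivity) hprodQpos
  have hinvK : (1:ℝ)/K ≤ Pm * Real.exp (2*((u:ℝ)*B)) := by
    have hKge : (1/(K:ℝ)) * Real.exp (-(2*((u:ℝ)*B))) ≤ Pm := by
      rw [hPfact]
      exact mul_le_mul_of_nonneg_left hLB (by positivity)
    have hfirst : (1:ℝ)/K = ((1/(K:ℝ)) * Real.exp (-(2*((u:ℝ)*B)))) * Real.exp (2*((u:ℝ)*B)) := by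
      rw [mul_assoc, ← Real.exp_add]; simp
    calc (1:ℝ)/K = ((1/(K:ℝ)) * Real.exp (-(2*((u:ℝ)*B)))) * Real.exp (2*((u:ℝ)*B)) := hfirst
    _ ≤ Pm * Real.exp (2*((u:ℝ)*B)) :=
        mul_le_mul_of_nonneg_right hKge (Real.exp_pos _).le
  -- X and n^{-ε}
  set X : ℝ := Real.exp (-Real.log n / (4 * Real.exp z * Real.log N)) with hXdef
  clear_value X
  have hXpos : 0 < X := by rw [hXdef]; exact Real.exp_pos _
  have hX1 : X ≤ 1 := by
    rw [hXdef]
    apply Real.exp_le_one_iff.mpr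
    apply div_nonpos_of_nonpos_of_nonneg (by linarith) (by positivity)
  have hnX : (n:ℝ)^(-ε) = X^2 := by
    rw [Real.rpow_def_of_pos hn0R, hXdef, pow_two, ← Real.exp_add]
    congr 1
    rw [hεdef]; field_simp; ring
  -- front factor
  have hKle : (K:ℝ) ≤ N ^ (u:ℕ) := by
    rw [hKcast]
    calc ∏ i, (p i:ℝ) ≤ ∏ _i : Fin u, N :=
        Finset.prod_le_prod (fun i _ => by positivity) (fun i _ => hpN i)
    _ = N ^ (u:ℕ) := by rw [Finset.prod_const, Finset.card_univ, Fintype.card_fin]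
  have hKeps : (K:ℝ)^ε ≤ Real.exp (u:ℝ) := by
    calc (K:ℝ)^ε ≤ (N ^ (u:ℕ))^ε := Real.rpow_le_rpow (by positivity) hKle hε0.le
    _ = Real.exp (Real.log N * ((u:ℝ) * ε)) := by
        rw [← Real.rpow_natCast N u, ← Real.rpow_mul hN0.le,
          Real.rpow_def_of_pos hN0]
    _ ≤ Real.exp (u:ℝ) := by
        apply Real.exp_le_exp.mpr
        have he : Real.log N * ((u:ℝ) * ε) = (u:ℝ)/(2*Real.exp z) := by
          rw [hεdef]; field_simp
        rw [he]
        rw [div_le_iff₀ (by positivity)]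
        have h1 : (1:ℝ) ≤ 2 * Real.exp z := by linarith
        have h2 := mul_le_mul_of_nonneg_left h1 (Nat.cast_nonneg (α := ℝ) u)
        linarith
  have hfront : ((n:ℝ)/K)^((1:ℝ)-ε)/n = (1/(K:ℝ)) * ((K:ℝ)^ε * (n:ℝ)^(-ε)) := by
    have e1 : ((n:ℝ)/K)^((1:ℝ)-ε) = (n:ℝ)^((1:ℝ)-ε) / (K:ℝ)^((1:ℝ)-ε) :=
      Real.div_rpow hn0R.le hKR.le _
    have e2 : (n:ℝ)^((1:ℝ)-ε) = (n:ℝ) * (n:ℝ)^(-ε) := by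
      rw [show (1:ℝ) - ε = 1 + (-ε) by ring, Real.rpow_add hn0R, Real.rpow_one]
    have e3 : ((K:ℝ)^((1:ℝ)-ε))⁻¹ = (K:ℝ)^ε / K := by
      rw [← Real.rpow_neg hKR.le, neg_sub, Real.rpow_sub hKR, Real.rpow_one]
    have hfirst : ((n:ℝ)/K)^((1:ℝ)-ε)/n = (n:ℝ)^((1:ℝ)-ε) * ((K:ℝ)^((1:ℝ)-ε))⁻¹ / n := by
      rw [e1]; ring
    calc ((n:ℝ)/K)^((1:ℝ)-ε)/n = (n:ℝ)^((1:ℝ)-ε) * ((K:ℝ)^((1:ℝ)-ε))⁻¹ / n := hfirst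
    _ = ((n:ℝ) * (n:ℝ)^(-ε)) * ((K:ℝ)^ε / K) / n := by rw [e2, e3]
    _ = (1/(K:ℝ)) * ((K:ℝ)^ε * (n:ℝ)^(-ε)) := by
        field_simp
  have hfront_le : ((n:ℝ)/K)^((1:ℝ)-ε)/n ≤ (1/(K:ℝ)) * (Real.exp (u:ℝ) * X^2) := by
    rw [hfront, hnX]
    apply mul_le_mul_of_nonneg_left _ (by positivity)
    exact mul_le_mul_of_nonneg_right hKeps (by positivity)
  -- assemble the bound
  have hbig : |(1 / (n : ℝ)) *
        (((Finset.Icc 1 n).filter fun m => ∀ i, deltaPZ z (p i) m = 1).card : ℝ) - Pm|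
      ≤ Pm * (Real.exp ((u:ℝ) + 4*(u:ℝ)*B) * X^2) := by
    have hprodnn : (0:ℝ) ≤ ∏ q ∈ Q, (1 + (q:ℝ)^(ε-1)) :=
      Finset.prod_nonneg fun q hq => by positivity
    calc |(1 / (n : ℝ)) *
        (((Finset.Icc 1 n).filter fun m => ∀ i, deltaPZ z (p i) m = 1).card : ℝ) - Pm|
        ≤ ∑ S ∈ Q.powerset, ((n:ℝ)/((K:ℝ) * ∏ q ∈ S, (q:ℝ)))^(1-ε) / n := hsum_bound
    _ = ((n:ℝ)/K)^((1:ℝ)-ε)/n * ∏ q ∈ Q, (1 + (q:ℝ)^(ε-1)) := hsum_eval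
    _ ≤ ((1/(K:ℝ)) * (Real.exp (u:ℝ) * X^2)) * Real.exp (2*((u:ℝ)*B)) := by
        apply mul_le_mul hfront_le hUB hprodnn (by positivity)
    _ ≤ ((Pm * Real.exp (2*((u:ℝ)*B))) * (Real.exp (u:ℝ) * X^2)) * Real.exp (2*((u:ℝ)*B)) := by
        have hstep2 : (1/(K:ℝ)) * (Real.exp (u:ℝ) * X^2)
            ≤ (Pm * Real.exp (2*((u:ℝ)*B))) * (Real.exp (u:ℝ) * X^2) :=
          mul_le_mul_of_nonneg_right hinvK (by positivity)
        exact mul_le_mul_of_nonneg_right hstep2 (Real.exp_pos _).le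
    _ = Pm * (Real.exp ((u:ℝ) + 4*(u:ℝ)*B) * X^2) := by
        have hexps : Real.exp (2*((u:ℝ)*B)) * Real.exp (u:ℝ) * Real.exp (2*((u:ℝ)*B))
            = Real.exp ((u:ℝ) + 4*(u:ℝ)*B) := by
          rw [← Real.exp_add, ← Real.exp_add]; congr 1; ring
        calc ((Pm * Real.exp (2*((u:ℝ)*B))) * (Real.exp (u:ℝ) * X^2)) * Real.exp (2*((u:ℝ)*B))
            = Pm * ((Real.exp (2*((u:ℝ)*B)) * Real.exp (u:ℝ) * Real.exp (2*((u:ℝ)*B))) * X^2) := by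
              ring
        _ = Pm * (Real.exp ((u:ℝ) + 4*(u:ℝ)*B) * X^2) := by rw [hexps]
  -- conclude
  refine ⟨((1 / (n : ℝ)) *
        (((Finset.Icc 1 n).filter fun m => ∀ i, deltaPZ z (p i) m = 1).card : ℝ) - Pm) / Pm,
      0, ?_, ?_, ?_⟩
  · rw [abs_div, abs_of_pos hPmpos, div_le_iff₀ hPmpos]
    calc |(1 / (n : ℝ)) *
        (((Finset.Icc 1 n).filter fun m => ∀ i, deltaPZ z (p i) m = 1).card : ℝ) - Pm|
        ≤ Pm * (Real.exp ((u:ℝ) + 4*(u:ℝ)*B) * X^2) := hbig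
    _ ≤ (Real.exp ((u:ℝ) + 4*(u:ℝ)*B) + 1) * X * Pm := by
        have hXX : X^2 ≤ X := by
          calc X^2 = X * X := by ring
          _ ≤ 1 * X := mul_le_mul_of_nonneg_right hX1 hXpos.le
          _ = X := one_mul X
        have hE := Real.exp_pos ((u:ℝ) + 4*(u:ℝ)*B)
        calc Pm * (Real.exp ((u:ℝ) + 4*(u:ℝ)*B) * X^2)
            = (Pm * Real.exp ((u:ℝ) + 4*(u:ℝ)*B)) * X^2 := by ring
        _ ≤ (Pm * Real.exp ((u:ℝ) + 4*(u:ℝ)*B)) * X :=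
            mul_le_mul_of_nonneg_left hXX (by positivity)
        _ ≤ (Pm * Real.exp ((u:ℝ) + 4*(u:ℝ)*B)) * X + Pm * X := by
            have : (0:ℝ) ≤ Pm * X := by positivity
            linarith
        _ = (Real.exp ((u:ℝ) + 4*(u:ℝ)*B) + 1) * X * Pm := by ring
  · rw [abs_zero]
    have : (0:ℝ) ≤ (n : ℝ) ^ (-(1:ℝ)/2) := Real.rpow_nonneg hn0R.le _
    positivity
  · have hne : Pm ≠ 0 := hPmpos.ne'
    field_simp
    ring
end
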